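/- arXiv:2409.10295 — 11 statements merged into one kernel-verified Lean document; each statement's English description precedes it below -/
import Mathlib

section
/- Let [l,u] be a hyperrectangle with θ̲ ≤ l ≤ u ≤ θ̄ componentwise. Then the convex hull of the image F([l,u]) of [l,u] under the folding operator equals the polytope of all vectors ψ' = (ψ'_{ij}) such that (a) F_{ij}(l) ≤ ψ'_{ij} ≤ F_{ij}(u) for all i ∈ [I] and j ∈ [J_i], and (b) for all i ∈ [I] and j ∈ [J_i] with l_i < z_{ij} < u_i, (ψ'_{ij} − F_{ij}(l)) · (F_{i,j+1}(u) − F_{i,j+1}(l)) ≥ (ψ'_{i,j+1} − F_{i,j+1}(l)) · (F_{ij}(u) − F_{ij}(l)). -/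
noncomputable def fold1 (J : ℕ) (z : ℕ → ℝ) (t : ℝ) : Fin J → ℝ :=
  fun j => min (max (t - z j.val) 0) (z (j.val + 1) - z j.val)

lemma fold1_clamp (J : ℕ) (z : ℕ → ℝ) (t : ℝ) (j : Fin J) :
    fold1 J z t j = min (max t (z j.val)) (z (j.val + 1)) - z j.val := by
  unfold fold1
  have h0 : (0:ℝ) = z j.val - z j.val := by ring
  rw [h0, max_sub_sub_right, min_sub_sub_right]

lemma fold1_mono (J : ℕ) (z : ℕ → ℝ) {t₁ t₂ : ℝ} (h : t₁ ≤ t₂) (j : Fin J) :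
    fold1 J z t₁ j ≤ fold1 J z t₂ j := by
  rw [fold1_clamp, fold1_clamp]
  exact sub_le_sub_right (min_le_min (max_le_max h le_rfl) le_rfl) _

lemma fold1_of_le (J : ℕ) (z : ℕ → ℝ) {t : ℝ} (j : Fin J) (hzz : z j.val ≤ z (j.val+1))
    (h : t ≤ z j.val) : fold1 J z t j = 0 := by
  rw [fold1_clamp, max_eq_right h, min_eq_left hzz, sub_self]

lemma fold1_of_ge (J : ℕ) (z : ℕ → ℝ) {t : ℝ} (j : Fin J) (hzz : z j.val ≤ z (j.val+1))
    (h : z (j.val+1) ≤ t) : fold1 J z t j = z (j.val+1) - z j.val := by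
  rw [fold1_clamp, max_eq_left (le_trans hzz h), min_eq_right h]

lemma zmono {J : ℕ} {z : ℕ → ℝ} (hz : ∀ j, j < J → z j < z (j+1))
    {a b : ℕ} (hab : a ≤ b) (hb : b ≤ J) : z a ≤ z b := by
  induction b with
  | zero => have : a = 0 := by omega
            simp [this]
  | succ n ih =>
    rcases Nat.lt_or_ge a (n+1) with h | h
    · have h1 := hz n (by omega)
      have h2 := ih (by omega) (by omega)
      linarith
    · have : a = n + 1 := by omega
      simp [this]

section hard
variable (J : ℕ) (z : ℕ → ℝ) (l u : ℝ) (ψ : Fin J → ℝ)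

/-- clamped breakpoint -/
noncomputable def tau (k : ℕ) : ℝ := min (max (z k) l) u

/-- vertex of the path -/
noncomputable def pvert (k : ℕ) : Fin J → ℝ := fold1 J z (tau z l u k)

/-- the "filling ratio" of coordinate k -/
noncomputable def rr (k : ℕ) : ℝ :=
  if z (k+1) ≤ l then 1
  else if u ≤ z k then 0
  else if hk : k < J then
    (ψ ⟨k, hk⟩ - fold1 J z l ⟨k, hk⟩) /
      (fold1 J z u ⟨k, hk⟩ - fold1 J z l ⟨k, hk⟩)
  else 0

noncomputable def ss (k : ℕ) : ℝ :=
  if k = 0 then 1 else if k ≤ J then rr J z l u ψ (k-1) else 0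

noncomputable def ww (k : ℕ) : ℝ := ss J z l u ψ k - ss J z l u ψ (k+1)

variable {J z l u ψ}
variable (hJ : 1 ≤ J) (hz : ∀ j, j < J → z j < z (j+1))
  (hl : z 0 ≤ l) (hlu : l ≤ u) (hu : u ≤ z J)

include hlu in
lemma tau_mem (k : ℕ) : tau z l u k ∈ Set.Icc l u :=
  ⟨le_min (le_max_right _ _) hlu, min_le_right _ _⟩

include hz hlu in
lemma pvert_eq {k : ℕ} (hk : k ≤ J) (j : Fin J) :
    pvert J z l u k j = if j.val < k then fold1 J z u j else fold1 J z l j := by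
  unfold pvert tau
  split_ifs with hjk
  · rcases le_total u (z (j.val+1)) with h1 | h1
    · have hzk : z (j.val+1) ≤ z k := zmono hz (by omega) hk
      have : u ≤ max (z k) l := le_trans (h1.trans hzk) (le_max_left _ _)
      rw [min_eq_right this]
    · have hzz : z j.val ≤ z (j.val+1) := (hz _ j.isLt).le
      have hzk : z (j.val+1) ≤ z k := zmono hz (by omega) hk
      have hτ' : z (j.val+1) ≤ min (max (z k) l) u :=
        le_min (le_trans hzk (le_max_left _ _)) h1
      rw [fold1_of_ge _ _ _ hzz hτ', fold1_of_ge _ _ _ hzz h1]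
  · rcases le_total l (z j.val) with h1 | h1
    · have hzz : z j.val ≤ z (j.val+1) := (hz _ j.isLt).le
      have hzk : z k ≤ z j.val := zmono hz (by omega) (by omega)
      have hτ' : min (max (z k) l) u ≤ z j.val :=
        le_trans (min_le_left _ _) (max_le hzk h1)
      rw [fold1_of_le _ _ _ hzz hτ', fold1_of_le _ _ _ hzz h1]
    · have hzk : z k ≤ z j.val := zmono hz (by omega) (by omega)
      rw [max_eq_right (hzk.trans h1), min_eq_left hlu]

include hlu in
lemma delta_nonneg (j : Fin J) : 0 ≤ fold1 J z u j - fold1 J z l j :=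
  sub_nonneg.mpr (fold1_mono J z hlu j)

include hz in
lemma delta_pos (j : Fin J) (h1 : l < z (j.val+1)) (h2 : z j.val < u) (h3 : l < u) :
    0 < fold1 J z u j - fold1 J z l j := by
  have h4 := hz j.val j.isLt
  rw [fold1_clamp, fold1_clamp, min_eq_left (max_le h1.le h4.le)]
  have : max l (z j.val) < min (max u (z j.val)) (z (j.val+1)) :=
    lt_min (max_lt (h3.trans_le (le_max_left u _)) (h2.trans_le (le_max_left u _)))
      (max_lt h1 h4)
  linarith

variable (hb : ∀ j, fold1 J z l j ≤ ψ j ∧ ψ j ≤ fold1 J z u j)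

include hlu hb in
lemma rr_nonneg (k : ℕ) : 0 ≤ rr J z l u ψ k := by
  unfold rr
  split_ifs with h1 h2 h3
  · exact zero_le_one
  · exact le_refl 0
  · exact div_nonneg (sub_nonneg.mpr (hb ⟨k, h3⟩).1) (delta_nonneg hlu ⟨k, h3⟩)
  · exact le_refl 0

include hlu hb in
lemma rr_le_one (k : ℕ) : rr J z l u ψ k ≤ 1 := by
  unfold rr
  split_ifs with h1 h2 h3
  · exact le_refl 1
  · exact zero_le_one
  · rcases eq_or_lt_of_le (delta_nonneg hlu ⟨k, h3⟩) with h | h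
    · rw [← h, div_zero]; exact zero_le_one
    · rw [div_le_one h]
      have := (hb ⟨k, h3⟩).2
      linarith
  · exact zero_le_one

include hz hlu hb in
lemma rr_mul (j : Fin J) :
    ψ j - fold1 J z l j = rr J z l u ψ j.val * (fold1 J z u j - fold1 J z l j) := by
  unfold rr
  split_ifs with h1 h2 h3
  · have hzz : z j.val ≤ z (j.val+1) := (hz _ j.isLt).le
    have eL : fold1 J z l j = z (j.val+1) - z j.val := fold1_of_ge _ _ _ hzz h1
    have eU : fold1 J z u j = z (j.val+1) - z j.val := fold1_of_ge _ _ _ hzz (h1.trans hlu)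
    have b1 := (hb j).1
    have b2 := (hb j).2
    rw [eL, eU] at *
    linarith
  · have hzz : z j.val ≤ z (j.val+1) := (hz _ j.isLt).le
    have eL : fold1 J z l j = 0 := fold1_of_le _ _ _ hzz (hlu.trans h2)
    have eU : fold1 J z u j = 0 := fold1_of_le _ _ _ hzz h2
    have b1 := (hb j).1
    have b2 := (hb j).2
    rw [eL, eU] at *
    linarith
  · simp only [Fin.eta]
    rcases eq_or_lt_of_le (delta_nonneg hlu j) with h | h
    · rw [← h, mul_zero]
      have b1 := (hb j).1
      have b2 := (hb j).2
      linarith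
    · exact (div_mul_cancel₀ _ h.ne').symm
  · exact absurd j.isLt h3


variable (hc : ∀ (j : Fin J) (h : j.val + 1 < J), l < z (j.val + 1) → z (j.val + 1) < u →
    (ψ j - fold1 J z l j) * (fold1 J z u ⟨j.val+1,h⟩ - fold1 J z l ⟨j.val+1,h⟩) ≥
    (ψ ⟨j.val+1,h⟩ - fold1 J z l ⟨j.val+1,h⟩) * (fold1 J z u j - fold1 J z l j))

include hz hlu hb hc in
lemma rr_mono (k : ℕ) (hk : k + 1 < J) : rr J z l u ψ (k+1) ≤ rr J z l u ψ k := by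
  by_cases hA : z (k+1+1) ≤ l
  · have h1 : z (k+1) ≤ l := le_trans (hz (k+1) hk).le hA
    have e : rr J z l u ψ k = 1 := by unfold rr; rw [if_pos h1]
    rw [e]; exact rr_le_one hlu hb (k+1)
  · by_cases hB : u ≤ z (k+1)
    · have e : rr J z l u ψ (k+1) = 0 := by unfold rr; rw [if_neg hA, if_pos hB]
      rw [e]; exact rr_nonneg hlu hb k
    · push_neg at hA hB
      by_cases hC : z (k+1) ≤ l
      · have e : rr J z l u ψ k = 1 := by unfold rr; rw [if_pos hC]
        rw [e]; exact rr_le_one hlu hb (k+1)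
      · push_neg at hC
        have hD : ¬ u ≤ z k := not_le.mpr ((hz k (by omega)).trans hB)
        have hkJ : k < J := by omega
        have e1 : rr J z l u ψ k =
            (ψ ⟨k,hkJ⟩ - fold1 J z l ⟨k,hkJ⟩) /
              (fold1 J z u ⟨k,hkJ⟩ - fold1 J z l ⟨k,hkJ⟩) := by
          unfold rr; rw [if_neg (not_le.mpr hC), if_neg hD, dif_pos hkJ]
        have e2 : rr J z l u ψ (k+1) =
            (ψ ⟨k+1,hk⟩ - fold1 J z l ⟨k+1,hk⟩) /
              (fold1 J z u ⟨k+1,hk⟩ - fold1 J z l ⟨k+1,hk⟩) := by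
          unfold rr; rw [if_neg (not_le.mpr hA), if_neg (not_le.mpr hB), dif_pos hk]
        have hlu' : l < u := hC.trans hB
        have hδ1 : 0 < fold1 J z u ⟨k,hkJ⟩ - fold1 J z l ⟨k,hkJ⟩ :=
          delta_pos hz ⟨k,hkJ⟩ hC ((hz k hkJ).trans hB) hlu'
        have hδ2 : 0 < fold1 J z u ⟨k+1,hk⟩ - fold1 J z l ⟨k+1,hk⟩ :=
          delta_pos hz ⟨k+1,hk⟩ hA hB hlu'
        rw [e1, e2, div_le_div_iff₀ hδ2 hδ1]
        exact hc ⟨k,hkJ⟩ hk hC hB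

include hJ hz hlu hb hc in
lemma mem_hull1 : ψ ∈ convexHull ℝ (fold1 J z '' Set.Icc l u) := by
  classical
  have hsJ1 : ss J z l u ψ (J+1) = 0 := by
    unfold ss; rw [if_neg (by omega), if_neg (by omega)]
  have hs0 : ss J z l u ψ 0 = 1 := by unfold ss; rw [if_pos rfl]
  have hsr : ∀ k, k < J → ss J z l u ψ (k+1) = rr J z l u ψ k := by
    intro k hk; unfold ss; rw [if_neg (by omega), if_pos (by omega)]
    congr 1
  have hw0 : ∀ k ∈ Finset.range (J+1), 0 ≤ ww J z l u ψ k := by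
    intro k hk
    rw [Finset.mem_range] at hk
    unfold ww
    rcases Nat.eq_zero_or_pos k with rfl | hk0
    · rw [hs0, hsr 0 (by omega)]
      have := rr_le_one hlu hb 0
      linarith
    · have hk1 : k - 1 + 1 = k := by omega
      have e1 : ss J z l u ψ k = rr J z l u ψ (k-1) := by
        have := hsr (k-1) (by omega)
        rwa [hk1] at this
      rcases Nat.lt_or_ge k J with hkJ | hkJ
      · rw [e1, hsr k hkJ]
        have := rr_mono hz hlu hb hc (k-1) (by omega)
        rw [hk1] at this
        linarith
      · have hkJ' : k = J := by omega
        subst hkJ'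
        rw [e1, hsJ1]
        have := rr_nonneg hlu hb (k-1)
        linarith
  have hwsum : ∑ k ∈ Finset.range (J+1), ww J z l u ψ k = 1 := by
    unfold ww
    rw [Finset.sum_range_sub', hs0, hsJ1, sub_zero]
  have hq1 : ∀ j : Fin J, ∑ k ∈ Finset.range (j.val+1), ww J z l u ψ k
      = 1 - rr J z l u ψ j.val := by
    intro j
    unfold ww
    rw [Finset.sum_range_sub', hs0, hsr j.val j.isLt]
  have hψeq : ψ = ∑ k ∈ Finset.range (J+1), ww J z l u ψ k • pvert J z l u k := by
    funext j
    rw [Finset.sum_apply]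
    have step : ∀ k ∈ Finset.range (J+1), (ww J z l u ψ k • pvert J z l u k) j
        = ww J z l u ψ k * (if j.val < k then fold1 J z u j else fold1 J z l j) := by
      intro k hk; rw [Finset.mem_range] at hk
      rw [Pi.smul_apply, smul_eq_mul, pvert_eq hz hlu (by omega) j]
    rw [Finset.sum_congr rfl step,
      ← Finset.sum_range_add_sum_Ico _ (show j.val+1 ≤ J+1 by omega)]
    have c1 : ∀ k ∈ Finset.range (j.val+1),
        ww J z l u ψ k * (if j.val < k then fold1 J z u j else fold1 J z l j)
        = ww J z l u ψ k * fold1 J z l j := by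
      intro k hk; rw [Finset.mem_range] at hk; rw [if_neg (by omega)]
    have c2 : ∀ k ∈ Finset.Ico (j.val+1) (J+1),
        ww J z l u ψ k * (if j.val < k then fold1 J z u j else fold1 J z l j)
        = ww J z l u ψ k * fold1 J z u j := by
      intro k hk; rw [Finset.mem_Ico] at hk; rw [if_pos (by omega)]
    rw [Finset.sum_congr rfl c1, Finset.sum_congr rfl c2, ← Finset.sum_mul, ← Finset.sum_mul,
      Finset.sum_Ico_eq_sub _ (show j.val+1 ≤ J+1 by omega), hwsum, hq1 j]
    have := rr_mul hz hlu hb j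
    ring_nf
    nlinarith [this]
  have hmem : ∀ k ∈ Finset.range (J+1), pvert J z l u k ∈ fold1 J z '' Set.Icc l u :=
    fun k _ => ⟨tau z l u k, tau_mem hlu k, rfl⟩
  have hcm := Finset.centerMass_mem_convexHull (Finset.range (J+1)) hw0
    (by rw [hwsum]; norm_num) hmem
  rwa [Finset.centerMass_eq_of_sum_1 _ _ hwsum, ← hψeq] at hcm

end hard

/-- the 1-D polytope -/
def poly1 (J : ℕ) (z : ℕ → ℝ) (l u : ℝ) : Set (Fin J → ℝ) :=
  {ψ : Fin J → ℝ |
    (∀ j, fold1 J z l j ≤ ψ j ∧ ψ j ≤ fold1 J z u j) ∧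
    ∀ (j : Fin J) (h : j.val + 1 < J), l < z (j.val + 1) → z (j.val + 1) < u →
      (ψ j - fold1 J z l j) * (fold1 J z u ⟨j.val+1,h⟩ - fold1 J z l ⟨j.val+1,h⟩) ≥
      (ψ ⟨j.val+1,h⟩ - fold1 J z l ⟨j.val+1,h⟩) * (fold1 J z u j - fold1 J z l j)}

lemma poly1_convex (J : ℕ) (z : ℕ → ℝ) (l u : ℝ) : Convex ℝ (poly1 J z l u) := by
  intro ψ₁ h₁ ψ₂ h₂ a b ha hb hab
  constructor
  · intro j
    have e1 := h₁.1 j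
    have e2 := h₂.1 j
    have : (a • ψ₁ + b • ψ₂) j = a * ψ₁ j + b * ψ₂ j := rfl
    rw [this]
    have key : a * fold1 J z l j + b * fold1 J z l j = fold1 J z l j := by
      rw [← add_mul, hab, one_mul]
    have key2 : a * fold1 J z u j + b * fold1 J z u j = fold1 J z u j := by
      rw [← add_mul, hab, one_mul]
    constructor
    · have p1 := mul_le_mul_of_nonneg_left e1.1 ha
      have p2 := mul_le_mul_of_nonneg_left e2.1 hb
      linarith
    · have p1 := mul_le_mul_of_nonneg_left e1.2 ha
      have p2 := mul_le_mul_of_nonneg_left e2.2 hb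
      linarith
  · intro j h hl' hu'
    have e1 := h₁.2 j h hl' hu'
    have e2 := h₂.2 j h hl' hu'
    have c1 : (a • ψ₁ + b • ψ₂) j = a * ψ₁ j + b * ψ₂ j := rfl
    have c2 : (a • ψ₁ + b • ψ₂) ⟨j.val+1,h⟩ = a * ψ₁ ⟨j.val+1,h⟩ + b * ψ₂ ⟨j.val+1,h⟩ := rfl
    rw [c1, c2]
    have d1 : a * ψ₁ j + b * ψ₂ j - fold1 J z l j
        = a * (ψ₁ j - fold1 J z l j) + b * (ψ₂ j - fold1 J z l j) := by
      linear_combination (fold1 J z l j) * hab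
    have d2 : a * ψ₁ ⟨j.val+1,h⟩ + b * ψ₂ ⟨j.val+1,h⟩ - fold1 J z l ⟨j.val+1,h⟩
        = a * (ψ₁ ⟨j.val+1,h⟩ - fold1 J z l ⟨j.val+1,h⟩)
          + b * (ψ₂ ⟨j.val+1,h⟩ - fold1 J z l ⟨j.val+1,h⟩) := by
      linear_combination (fold1 J z l ⟨j.val+1,h⟩) * hab
    rw [d1, d2]
    have p1 := mul_le_mul_of_nonneg_left e1 ha
    have p2 := mul_le_mul_of_nonneg_left e2 hb
    nlinarith [p1, p2]

lemma image_subset_poly1 (J : ℕ) (z : ℕ → ℝ) (l u : ℝ)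
    (hz : ∀ j, j < J → z j < z (j+1)) (hlu : l ≤ u) :
    fold1 J z '' Set.Icc l u ⊆ poly1 J z l u := by
  rintro _ ⟨t, ht, rfl⟩
  constructor
  · exact fun j => ⟨fold1_mono J z ht.1 j, fold1_mono J z ht.2 j⟩
  · intro j h hl' hu'
    have hzz : z j.val ≤ z (j.val+1) := (hz j.val (by omega)).le
    have hzz' : z (j.val+1) ≤ z (j.val+2) := (hz (j.val+1) h).le
    rcases le_total t (z (j.val+1)) with h1 | h1
    · have e1 : fold1 J z t ⟨j.val+1,h⟩ = 0 := fold1_of_le J z _ hzz' h1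
      have e2 : fold1 J z l ⟨j.val+1,h⟩ = 0 := fold1_of_le J z _ hzz' hl'.le
      rw [e1, e2]
      have := fold1_mono J z ht.1 j
      have := fold1_mono J z (le_trans ht.1 ht.2) j
      have h3 : fold1 J z l ⟨j.val+1,h⟩ ≤ fold1 J z u ⟨j.val+1,h⟩ :=
        fold1_mono J z (le_trans ht.1 ht.2) _
      rw [e2] at h3
      nlinarith
    · have e1 : fold1 J z t j = z (j.val+1) - z j.val := fold1_of_ge J z _ hzz h1
      have e2 : fold1 J z u j = z (j.val+1) - z j.val := fold1_of_ge J z _ hzz hu'.le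
      have h3 : fold1 J z t ⟨j.val+1,h⟩ ≤ fold1 J z u ⟨j.val+1,h⟩ := fold1_mono J z ht.2 _
      have h4 : fold1 J z l j ≤ fold1 J z u j := fold1_mono J z hlu j
      have h5 : fold1 J z l ⟨j.val+1,h⟩ ≤ fold1 J z t ⟨j.val+1,h⟩ := fold1_mono J z ht.1 _
      rw [e1, e2] at *
      nlinarith



lemma hull1 {J : ℕ} {z : ℕ → ℝ} {l u : ℝ} (hJ : 1 ≤ J)
    (hz : ∀ j, j < J → z j < z (j+1)) (hlu : l ≤ u) :
    convexHull ℝ (fold1 J z '' Set.Icc l u) = poly1 J z l u :=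
  le_antisymm
    (convexHull_min (image_subset_poly1 J z l u hz hlu) (poly1_convex J z l u))
    (fun _ hψ => mem_hull1 hJ hz hlu hψ.1 hψ.2)

/-- The folding operator: `fold I J z θ i j` is the `j`-th (0-based) folded component
of coordinate `i`, i.e. `F_{i,j+1}(θ) = min(max(θ_i − z_{i,j}, 0), z_{i,j+1} − z_{i,j})`
in the paper's 1-based indexing. -/
noncomputable def fold (I : ℕ) (J : Fin I → ℕ) (z : (i : Fin I) → ℕ → ℝ)
    (θ : Fin I → ℝ) : (i : Fin I) → Fin (J i) → ℝ :=
  fun i j => min (max (θ i - z i j.val) 0) (z i (j.val + 1) - z i j.val)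

/-- The convex hull of the folded hyperrectangle `[l,u] ⊆ [θ̲,θ̄]` equals the polytope
described by the bound constraints and the cross-multiplied monotonicity constraints. -/
theorem stmt_0 (I : ℕ) (J : Fin I → ℕ) (hJ : ∀ i, 1 ≤ J i)
    (z : (i : Fin I) → ℕ → ℝ)
    (hz : ∀ i, ∀ j, j < J i → z i j < z i (j + 1))
    (l u : Fin I → ℝ)
    (hl : ∀ i, z i 0 ≤ l i) (hlu : l ≤ u) (hu : ∀ i, u i ≤ z i (J i)) :
    convexHull ℝ (fold I J z '' Set.Icc l u) =
      {ψ : (i : Fin I) → Fin (J i) → ℝ |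
        (∀ i j, fold I J z l i j ≤ ψ i j ∧ ψ i j ≤ fold I J z u i j) ∧
        ∀ (i : Fin I) (j : Fin (J i)) (h : j.val + 1 < J i),
          l i < z i (j.val + 1) → z i (j.val + 1) < u i →
          (ψ i j - fold I J z l i j) *
              (fold I J z u i ⟨j.val + 1, h⟩ - fold I J z l i ⟨j.val + 1, h⟩) ≥
            (ψ i ⟨j.val + 1, h⟩ - fold I J z l i ⟨j.val + 1, h⟩) *
              (fold I J z u i j - fold I J z l i j)} := by
  have himg : fold I J z '' Set.Icc l u
      = Set.univ.pi (fun i => fold1 (J i) (z i) '' Set.Icc (l i) (u i)) := by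
    ext g
    constructor
    · rintro ⟨θ, hθ, rfl⟩ i _
      exact ⟨θ i, ⟨hθ.1 i, hθ.2 i⟩, rfl⟩
    · intro hg
      choose t ht hgt using fun i => hg i (Set.mem_univ i)
      exact ⟨t, ⟨fun i => (ht i).1, fun i => (ht i).2⟩, funext hgt⟩
  rw [himg, convexHull_pi]
  ext ψ
  simp only [Set.mem_pi, Set.mem_univ, true_implies, Set.mem_setOf_eq]
  have hone : ∀ i, convexHull ℝ (fold1 (J i) (z i) '' Set.Icc (l i) (u i))
      = poly1 (J i) (z i) (l i) (u i) := fun i => hull1 (hJ i) (hz i) (hlu i)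
  constructor
  · intro h
    have h' : ∀ i, ψ i ∈ poly1 (J i) (z i) (l i) (u i) := fun i => (hone i) ▸ h i
    exact ⟨fun i j => (h' i).1 j, fun i j hj h1 h2 => (h' i).2 j hj h1 h2⟩
  · intro h i
    rw [hone i]
    exact ⟨fun j => h.1 i j, fun j hj h1 h2 => h.2 i j hj h1 h2⟩
end

section
/- Let [z⁻,z⁺] be a grid rectangle and let ψ' satisfy F⁺(ψ') ∈ [θ̲,θ̄] and 0 ≤ ψ'_{ij} ≤ z_{ij} − z_{i,j−1} for all i ∈ [I], j ∈ [J_i], together with the cross-multiplied monotonicity inequalities describing conv(F([θ̲,θ̄])) (namely (ψ'_{ij} − F_{ij}(θ̲))(F_{i,j+1}(θ̄) − F_{i,j+1}(θ̲)) ≥ (ψ'_{i,j+1} − F_{i,j+1}(θ̲))(F_{ij}(θ̄) − F_{ij}(θ̲)) whenever θ̲_i < z_{ij} < θ̄_i). Then d(F⁺(ψ'), [z⁻,z⁺]) ≤ d'(ψ', [z⁻,z⁺]). -/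
/-- The retraction `F⁺`. -/
noncomputable def retr (I : ℕ) (J : Fin I → ℕ) (z : (i : Fin I) → ℕ → ℝ)
    (ψ : (i : Fin I) → Fin (J i) → ℝ) : Fin I → ℝ :=
  fun i => z i 0 + ∑ j, ψ i j

/-- ℓ1-distance from a point to the box `[zm, zp]`. -/
noncomputable def l1dist (I : ℕ) (θ zm zp : Fin I → ℝ) : ℝ :=
  sInf ((fun θ' => ∑ i, |θ i - θ' i|) '' Set.Icc zm zp)

/-- The linear distance `d'(ψ', [z⁻, z⁺])`. -/
noncomputable def dlin (I : ℕ) (J : Fin I → ℕ) (z : (i : Fin I) → ℕ → ℝ)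
    (ψ : (i : Fin I) → Fin (J i) → ℝ) (zm zp : Fin I → ℝ) : ℝ :=
  ∑ i, ((∑ j ∈ Finset.univ.filter (fun j : Fin (J i) => zp i < z i (j.val + 1)), ψ i j)
    + zm i - z i 0
    - ∑ j ∈ Finset.univ.filter (fun j : Fin (J i) => z i (j.val + 1) ≤ zm i), ψ i j)



private lemma zlt_aux (z : ℕ → ℝ) (n : ℕ) (hz : ∀ j < n, z j < z (j + 1)) :
    ∀ b ≤ n, ∀ a < b, z a < z b := by
  intro b
  induction b with
  | zero => intro _ a ha; omega
  | succ b ih =>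
    intro hb a ha
    rcases Nat.lt_succ_iff_lt_or_eq.mp ha with h | h
    · exact lt_trans (ih (by omega) a h) (hz b (by omega))
    · subst h; exact hz a (by omega)

private lemma zle_aux (z : ℕ → ℝ) (n : ℕ) (hz : ∀ j < n, z j < z (j + 1))
    {a b : ℕ} (hab : a ≤ b) (hb : b ≤ n) : z a ≤ z b := by
  rcases eq_or_lt_of_le hab with h | h
  · subst h; rfl
  · exact le_of_lt (zlt_aux z n hz b hb a h)

private lemma sum_lt_le_aux (n k : ℕ) (hk : k ≤ n) (z : ℕ → ℝ) (ψ : Fin n → ℝ)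
    (h : ∀ j : Fin n, ψ j ≤ z (j.val + 1) - z j.val) :
    ∑ j ∈ Finset.univ.filter (fun j : Fin n => j.val < k), ψ j ≤ z k - z 0 := by
  induction k with
  | zero => simp
  | succ k ih =>
    have hfil : (Finset.univ.filter (fun j : Fin n => j.val < k + 1))
        = insert ⟨k, by omega⟩ (Finset.univ.filter (fun j : Fin n => j.val < k)) := by
      ext j
      simp only [Finset.mem_filter, Finset.mem_insert, Finset.mem_univ, true_and]
      constructor
      · intro hj
        rcases Nat.lt_succ_iff_lt_or_eq.mp hj with h' | h'
        · exact Or.inr h'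
        · exact Or.inl (Fin.ext h')
      · rintro (rfl | hj)
        · simp
        · omega
    rw [hfil, Finset.sum_insert (by simp)]
    have := ih (by omega)
    have := h ⟨k, by omega⟩
    simp only at this
    linarith

theorem stmt_1 (I : ℕ) (J : Fin I → ℕ) (hJ : ∀ i, 1 ≤ J i)
    (z : (i : Fin I) → ℕ → ℝ)
    (hz : ∀ i, ∀ j, j < J i → z i j < z i (j + 1))
    -- grid rectangle [zm, zp]
    (zm zp : Fin I → ℝ) (hmp : zm ≤ zp)
    (hzm : ∀ i, ∃ k ≤ J i, zm i = z i k) (hzp : ∀ i, ∃ k ≤ J i, zp i = z i k)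
    -- assumptions on ψ'
    (ψ : (i : Fin I) → Fin (J i) → ℝ)
    (hretr : ∀ i, z i 0 ≤ retr I J z ψ i ∧ retr I J z ψ i ≤ z i (J i))
    (hbound : ∀ i j, 0 ≤ ψ i j ∧ ψ i j ≤ z i (j.val + 1) - z i j.val)
    (hcross : ∀ (i : Fin I) (j : Fin (J i)) (h : j.val + 1 < J i),
      z i 0 < z i (j.val + 1) → z i (j.val + 1) < z i (J i) →
      (ψ i j - fold I J z (fun i' => z i' 0) i j) *
          (fold I J z (fun i' => z i' (J i')) i ⟨j.val + 1, h⟩ -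
            fold I J z (fun i' => z i' 0) i ⟨j.val + 1, h⟩) ≥
        (ψ i ⟨j.val + 1, h⟩ - fold I J z (fun i' => z i' 0) i ⟨j.val + 1, h⟩) *
          (fold I J z (fun i' => z i' (J i')) i j - fold I J z (fun i' => z i' 0) i j)) :
    l1dist I (retr I J z ψ) zm zp ≤ dlin I J z ψ zm zp := by
  classical
  set θ : Fin I → ℝ := retr I J z ψ with hθ
  set θ' : Fin I → ℝ := fun i => max (zm i) (min (zp i) (θ i)) with hθ'
  have hmem : θ' ∈ Set.Icc zm zp := by
    constructor
    · intro i; exact le_max_left _ _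
    · intro i; exact max_le (hmp i) (min_le_left _ _)
  have hle : l1dist I θ zm zp ≤ ∑ i, |θ i - θ' i| := by
    apply csInf_le
    · refine ⟨0, ?_⟩
      rintro x ⟨y, _, rfl⟩
      exact Finset.sum_nonneg fun i _ => abs_nonneg _
    · exact ⟨θ', hmem, rfl⟩
  refine le_trans hle ?_
  unfold dlin
  apply Finset.sum_le_sum
  intro i _
  obtain ⟨km, hkm, hzmi⟩ := hzm i
  obtain ⟨kp, hkp, hzpi⟩ := hzp i
  -- rewrite the filters
  have hfp : (Finset.univ.filter (fun j : Fin (J i) => zp i < z i (j.val + 1)))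
      = Finset.univ.filter (fun j : Fin (J i) => ¬ j.val < kp) := by
    apply Finset.filter_congr
    intro j _
    rw [hzpi]
    constructor
    · intro h hc
      exact absurd (zle_aux (z i) (J i) (hz i) (show j.val + 1 ≤ kp by omega) hkp)
        (not_le.mpr h)
    · intro h
      exact zlt_aux (z i) (J i) (hz i) (j.val + 1) (by omega) kp (by omega)
  have hfm : (Finset.univ.filter (fun j : Fin (J i) => z i (j.val + 1) ≤ zm i))
      = Finset.univ.filter (fun j : Fin (J i) => j.val < km) := by
    apply Finset.filter_congr
    intro j _
    rw [hzmi]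
    constructor
    · intro h
      by_contra hc
      exact absurd h (not_le.mpr (zlt_aux (z i) (J i) (hz i) (j.val + 1) (by omega) km (by omega)))
    · intro h
      exact zle_aux (z i) (J i) (hz i) (by omega) (by omega)
  rw [hfp, hfm, hzmi]
  -- key sum facts
  have hsplitp : ∑ j, ψ i j
      = ∑ j ∈ Finset.univ.filter (fun j : Fin (J i) => j.val < kp), ψ i j
        + ∑ j ∈ Finset.univ.filter (fun j : Fin (J i) => ¬ j.val < kp), ψ i j :=
    (Finset.sum_filter_add_sum_filter_not _ _ _).symm
  have hsplitm : ∑ j, ψ i j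
      = ∑ j ∈ Finset.univ.filter (fun j : Fin (J i) => j.val < km), ψ i j
        + ∑ j ∈ Finset.univ.filter (fun j : Fin (J i) => ¬ j.val < km), ψ i j :=
    (Finset.sum_filter_add_sum_filter_not _ _ _).symm
  have hAp : ∑ j ∈ Finset.univ.filter (fun j : Fin (J i) => j.val < kp), ψ i j
      ≤ z i kp - z i 0 :=
    sum_lt_le_aux (J i) kp hkp (z i) (ψ i) (fun j => (hbound i j).2)
  have hAm : ∑ j ∈ Finset.univ.filter (fun j : Fin (J i) => j.val < km), ψ i j
      ≤ z i km - z i 0 :=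
    sum_lt_le_aux (J i) km hkm (z i) (ψ i) (fun j => (hbound i j).2)
  have hNp : 0 ≤ ∑ j ∈ Finset.univ.filter (fun j : Fin (J i) => ¬ j.val < kp), ψ i j :=
    Finset.sum_nonneg fun j _ => (hbound i j).1
  have hNm : 0 ≤ ∑ j ∈ Finset.univ.filter (fun j : Fin (J i) => ¬ j.val < km), ψ i j :=
    Finset.sum_nonneg fun j _ => (hbound i j).1
  have hθi : θ i = z i 0 + ∑ j, ψ i j := rfl
  -- the three bounds
  set D : ℝ := (∑ j ∈ Finset.univ.filter (fun j : Fin (J i) => ¬ j.val < kp), ψ i j)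
      + z i km - z i 0
      - ∑ j ∈ Finset.univ.filter (fun j : Fin (J i) => j.val < km), ψ i j with hD
  have h1 : θ i - zp i ≤ D := by rw [hzpi]; rw [hθi] at *; linarith [hsplitp]
  have h2 : z i km - θ i ≤ D := by rw [hθi] at *; linarith [hsplitm]
  have h3 : 0 ≤ D := by linarith
  have habs : |θ i - θ' i| ≤ D := by
    rw [abs_sub_le_iff]
    constructor
    · have : θ i - θ' i ≤ θ i - min (zp i) (θ i) :=
        sub_le_sub_left (le_max_right _ _) _
      rcases min_cases (zp i) (θ i) with ⟨h, _⟩ | ⟨h, _⟩ <;> rw [h] at this <;> linarith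
    · have : θ' i ≤ max (zm i) (θ i) := max_le_max le_rfl (min_le_right _ _)
      rw [hzmi] at this
      rcases max_cases (z i km) (θ i) with ⟨h, _⟩ | ⟨h, _⟩ <;> rw [h] at this <;> linarith
  exact habs
end

section
/- For every θ ∈ ℝ^I with θ̲ ≤ θ ≤ θ̄ and every grid rectangle [z⁻,z⁺], the linear distance of the folded point equals the ℓ1-distance of the original point: d'(F(θ), [z⁻,z⁺]) = d(θ, [z⁻,z⁺]). -/
lemma min_max_sub (t a b : ℝ) (hab : a ≤ b) :
    min (max (t - a) 0) (b - a) = min t b - min t a := by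
  rcases le_total t a with h | h
  · rw [max_eq_right (by linarith), min_eq_left (by linarith),
      min_eq_left h, min_eq_left (h.trans hab)]
    ring
  · rw [max_eq_left (by linarith), min_eq_right h]
    rcases le_total t b with h2 | h2
    · rw [min_eq_left (by linarith), min_eq_left h2]
    · rw [min_eq_right (by linarith), min_eq_right h2]

lemma z_mono {n : ℕ} (z : ℕ → ℝ) (hz : ∀ j, j < n → z j < z (j + 1)) :
    ∀ a b, a ≤ b → b ≤ n → z a ≤ z b := by
  have H : ∀ b, b ≤ n → ∀ a, a ≤ b → z a ≤ z b := by
    intro b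
    induction b with
    | zero =>
      intro _ a ha
      have h0 : a = 0 := by omega
      subst h0
      exact le_refl _
    | succ c ih =>
      intro hb a ha
      rcases Nat.eq_or_lt_of_le ha with h | h
      · rw [h]
      · exact le_trans (ih (by omega) a (by omega)) (le_of_lt (hz c (by omega)))
  exact fun a b hab hb => H b hb a hab

lemma z_strict {n : ℕ} (z : ℕ → ℝ) (hz : ∀ j, j < n → z j < z (j + 1)) :
    ∀ a b, a < b → b ≤ n → z a < z b := by
  intro a b hab hb
  obtain ⟨c, rfl⟩ : ∃ c, b = c + 1 := ⟨b - 1, by omega⟩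
  exact lt_of_le_of_lt (z_mono z hz a c (by omega) (by omega)) (hz c (by omega))

theorem stmt_2 (I : ℕ) (J : Fin I → ℕ) (hJ : ∀ i, 1 ≤ J i)
    (z : (i : Fin I) → ℕ → ℝ)
    (hz : ∀ i, ∀ j, j < J i → z i j < z i (j + 1))
    -- grid rectangle [zm, zp]
    (zm zp : Fin I → ℝ) (hmp : zm ≤ zp)
    (hzm : ∀ i, ∃ k ≤ J i, zm i = z i k) (hzp : ∀ i, ∃ k ≤ J i, zp i = z i k)
    (θ : Fin I → ℝ) (hθl : ∀ i, z i 0 ≤ θ i) (hθu : ∀ i, θ i ≤ z i (J i)) :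
    dlin I J z (fold I J z θ) zm zp = l1dist I θ zm zp := by
  -- the per-coordinate distance
  set D : Fin I → ℝ := fun i => (θ i - min (θ i) (zp i)) + (zm i - min (θ i) (zm i)) with hDdef
  have key : ∀ i : Fin I,
      ((∑ j ∈ Finset.univ.filter (fun j : Fin (J i) => zp i < z i (j.val + 1)),
          fold I J z θ i j)
        + zm i - z i 0
        - ∑ j ∈ Finset.univ.filter (fun j : Fin (J i) => z i (j.val + 1) ≤ zm i),
            fold I J z θ i j) = D i := by
    intro i
    obtain ⟨m, hmJ, hm⟩ := hzp i
    obtain ⟨k, hkJ, hk⟩ := hzm i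
    set g : ℕ → ℝ := fun t => min (θ i) (z i t) with hg
    have hfold : ∀ j : Fin (J i), fold I J z θ i j = g (j.val + 1) - g j.val := by
      intro j
      exact min_max_sub _ _ _ (le_of_lt (hz i j.val j.isLt))
    have hA : (∑ j ∈ Finset.univ.filter (fun j : Fin (J i) => zp i < z i (j.val + 1)),
        fold I J z θ i j) = g (J i) - g m := by
      have hcond : ∀ j : Fin (J i), (zp i < z i (j.val + 1)) ↔ m ≤ j.val := by
        intro j
        rw [hm]
        constructor
        · intro h
          by_contra hc
          push_neg at hc
          exact absurd (z_mono (z i) (hz i) (j.val + 1) m (by omega) hmJ) (by linarith)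
        · intro h
          exact z_strict (z i) (hz i) m (j.val + 1) (by omega) j.isLt
      calc (∑ j ∈ Finset.univ.filter (fun j : Fin (J i) => zp i < z i (j.val + 1)),
            fold I J z θ i j)
          = ∑ j : Fin (J i), if m ≤ j.val then g (j.val + 1) - g j.val else 0 := by
            rw [Finset.sum_filter]
            exact Finset.sum_congr rfl fun j _ => by
              rw [hfold j]; simp only [hcond j]
        _ = ∑ t ∈ Finset.range (J i), if m ≤ t then g (t + 1) - g t else 0 :=
            Fin.sum_univ_eq_sum_range (fun t => if m ≤ t then g (t + 1) - g t else 0) (J i)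
        _ = ∑ t ∈ Finset.Ico m (J i), (g (t + 1) - g t) := by
            rw [← Finset.sum_filter]
            congr 1
            ext t
            simp only [Finset.mem_filter, Finset.mem_range, Finset.mem_Ico]
            omega
        _ = g (J i) - g m := by
            rw [Finset.sum_Ico_eq_sub _ hmJ, Finset.sum_range_sub, Finset.sum_range_sub]
            ring
    have hB : (∑ j ∈ Finset.univ.filter (fun j : Fin (J i) => z i (j.val + 1) ≤ zm i),
        fold I J z θ i j) = g k - g 0 := by
      have hcond : ∀ j : Fin (J i), (z i (j.val + 1) ≤ zm i) ↔ j.val < k := by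
        intro j
        rw [hk]
        constructor
        · intro h
          by_contra hc
          push_neg at hc
          exact absurd (z_strict (z i) (hz i) k (j.val + 1) (by omega) j.isLt) (by linarith)
        · intro h
          exact z_mono (z i) (hz i) (j.val + 1) k (by omega) hkJ
      calc (∑ j ∈ Finset.univ.filter (fun j : Fin (J i) => z i (j.val + 1) ≤ zm i),
            fold I J z θ i j)
          = ∑ j : Fin (J i), if j.val < k then g (j.val + 1) - g j.val else 0 := by
            rw [Finset.sum_filter]
            exact Finset.sum_congr rfl fun j _ => by
              rw [hfold j]; simp only [hcond j]
        _ = ∑ t ∈ Finset.range (J i), if t < k then g (t + 1) - g t else 0 :=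
            Fin.sum_univ_eq_sum_range (fun t => if t < k then g (t + 1) - g t else 0) (J i)
        _ = ∑ t ∈ Finset.range k, (g (t + 1) - g t) := by
            rw [← Finset.sum_filter]
            congr 1
            ext t
            simp only [Finset.mem_filter, Finset.mem_range]
            omega
        _ = g k - g 0 := Finset.sum_range_sub g k
    rw [hA, hB]
    have hgJ : g (J i) = θ i := min_eq_left (hθu i)
    have hg0 : g 0 = z i 0 := min_eq_right (hθl i)
    have hgm : g m = min (θ i) (zp i) := by rw [hg, hm]
    have hgk : g k = min (θ i) (zm i) := by rw [hg, hk]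
    rw [hgJ, hg0, hgm, hgk, hDdef]
    ring
  -- l1dist equals the sum of D
  set p : Fin I → ℝ := fun i => max (zm i) (min (θ i) (zp i)) with hp
  have hpIcc : p ∈ Set.Icc zm zp := by
    constructor
    · intro i; exact le_max_left _ _
    · intro i; exact max_le (hmp i) (min_le_right _ _)
  have habs : ∀ i, |θ i - p i| = D i := by
    intro i
    simp only [hp, hDdef]
    rcases le_total (θ i) (zm i) with h | h
    · rw [min_eq_left (h.trans (hmp i)), min_eq_left h, max_eq_left h,
        abs_of_nonpos (by linarith)]
      ring
    · rw [min_eq_right h]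
      rcases le_total (θ i) (zp i) with h2 | h2
      · rw [min_eq_left h2, max_eq_right h, abs_of_nonpos (by linarith)]
        ring
      · rw [min_eq_right h2, max_eq_right (hmp i), abs_of_nonneg (by linarith)]
        ring
  have hlb : ∀ x ∈ ((fun θ' => ∑ i, |θ i - θ' i|) '' Set.Icc zm zp), (∑ i, D i) ≤ x := by
    rintro x ⟨θ', hθ', rfl⟩
    apply Finset.sum_le_sum
    intro i _
    have ha := le_abs_self (θ i - θ' i)
    have hb := neg_le_abs (θ i - θ' i)
    have h1 : zm i ≤ θ' i := hθ'.1 i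
    have h2 : θ' i ≤ zp i := hθ'.2 i
    simp only [hDdef]
    rcases le_total (θ i) (zm i) with h | h
    · rw [min_eq_left (h.trans (hmp i)), min_eq_left h]
      linarith
    · rw [min_eq_right h]
      rcases le_total (θ i) (zp i) with h3 | h3
      · rw [min_eq_left h3]
        have := abs_nonneg (θ i - θ' i)
        linarith
      · rw [min_eq_right h3]
        linarith
  have hmem : (∑ i, D i) ∈ ((fun θ' => ∑ i, |θ i - θ' i|) '' Set.Icc zm zp) :=
    ⟨p, hpIcc, Finset.sum_congr rfl fun i _ => habs i⟩
  have hD : l1dist I θ zm zp = ∑ i, D i := by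
    rw [l1dist]
    exact le_antisymm (csInf_le ⟨∑ i, D i, hlb⟩ hmem) (le_csInf ⟨_, hmem⟩ hlb)
  rw [hD, dlin]
  exact Finset.sum_congr rfl fun i _ => key i
end

section
/- Let ψ' = (ψ'_{ij}) satisfy 0 ≤ ψ'_{ij} ≤ z_{ij} − z_{i,j−1} for all i ∈ [I] and j ∈ [J_i]. Then for every i ∈ [I] and j ∈ [J_i], Σ_{j'=1}^{j} ψ'_{ij'} ≤ min{F⁺_i(ψ'), z_{ij}} − θ̲_i = Σ_{j'=1}^{j} F_{ij'}(F⁺(ψ')). -/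
lemma filter_le_zero' {n : ℕ} (h : 0 < n) :
    (Finset.univ.filter (fun j' : Fin n => j'.val ≤ 0)) = {⟨0, h⟩} := by
  ext x; simp [Fin.ext_iff, Nat.le_zero]

lemma filter_le_succ' {n : ℕ} (m : ℕ) (h : m + 1 < n) :
    (Finset.univ.filter (fun j' : Fin n => j'.val ≤ m + 1)) =
      insert ⟨m + 1, h⟩ (Finset.univ.filter (fun j' : Fin n => j'.val ≤ m)) := by
  ext x; simp [Fin.ext_iff]; omega

theorem stmt_4 (I : ℕ) (J : Fin I → ℕ) (hJ : ∀ i, 1 ≤ J i)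
    (z : (i : Fin I) → ℕ → ℝ)
    (hz : ∀ i, ∀ j, j < J i → z i j < z i (j + 1))
    (ψ : (i : Fin I) → Fin (J i) → ℝ)
    (hbound : ∀ i j, 0 ≤ ψ i j ∧ ψ i j ≤ z i (j.val + 1) - z i j.val) :
    ∀ (i : Fin I) (j : Fin (J i)),
      (∑ j' ∈ Finset.univ.filter (fun j' : Fin (J i) => j' ≤ j), ψ i j')
          ≤ min (retr I J z ψ i) (z i (j.val + 1)) - z i 0 ∧
      min (retr I J z ψ i) (z i (j.val + 1)) - z i 0
          = ∑ j' ∈ Finset.univ.filter (fun j' : Fin (J i) => j' ≤ j),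
              fold I J z (retr I J z ψ) i j' := by
  intro i j
  set θ : ℝ := retr I J z ψ i with hθ
  have hS : θ = z i 0 + ∑ j', ψ i j' := rfl
  have hθ0 : z i 0 ≤ θ := by
    rw [hS]
    have : (0:ℝ) ≤ ∑ j', ψ i j' :=
      Finset.sum_nonneg fun j' _ => (hbound i j').1
    linarith
  have fold_eq : ∀ j' : Fin (J i),
      fold I J z (retr I J z ψ) i j' = min θ (z i (j'.val + 1)) - min θ (z i j'.val) := by
    intro j'
    have hzz := hz i j'.val j'.isLt
    simp only [fold, ← hθ]
    rcases le_total θ (z i j'.val) with h1 | h1 <;>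
      rcases le_total θ (z i (j'.val + 1)) with h2 | h2 <;>
      simp [min_def, max_def] <;> split_ifs <;> linarith
  -- telescoping sum of fold
  have tele : ∀ m : ℕ, (hm : m < J i) →
      (∑ j' ∈ Finset.univ.filter (fun j' : Fin (J i) => j'.val ≤ m),
        fold I J z (retr I J z ψ) i j') = min θ (z i (m + 1)) - z i 0 := by
    intro m
    induction m with
    | zero =>
      intro hm
      rw [filter_le_zero' hm, Finset.sum_singleton, fold_eq]
      simp [min_eq_right hθ0]
    | succ m ih =>
      intro hm
      rw [filter_le_succ' m hm, Finset.sum_insert (by simp), fold_eq,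
        ih (Nat.lt_of_succ_lt hm)]
      ring
  -- partial sums of ψ bounded by z
  have bnd : ∀ m : ℕ, (hm : m < J i) →
      (∑ j' ∈ Finset.univ.filter (fun j' : Fin (J i) => j'.val ≤ m), ψ i j')
        ≤ z i (m + 1) - z i 0 := by
    intro m
    induction m with
    | zero =>
      intro hm
      rw [filter_le_zero' hm, Finset.sum_singleton]
      exact (hbound i ⟨0, hm⟩).2
    | succ m ih =>
      intro hm
      rw [filter_le_succ' m hm, Finset.sum_insert (by simp)]
      have h1 := (hbound i ⟨m + 1, hm⟩).2
      have h2 := ih (Nat.lt_of_succ_lt hm)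
      simp only at h1
      linarith
  have hfilter : Finset.univ.filter (fun j' : Fin (J i) => j' ≤ j)
      = Finset.univ.filter (fun j' : Fin (J i) => j'.val ≤ j.val) := by
    ext x; simp only [Finset.mem_filter, Fin.le_def]
  have hle_total : (∑ j' ∈ Finset.univ.filter (fun j' : Fin (J i) => j' ≤ j), ψ i j')
      ≤ θ - z i 0 := by
    rw [hS]
    have : (∑ j' ∈ Finset.univ.filter (fun j' : Fin (J i) => j' ≤ j), ψ i j')
        ≤ ∑ j', ψ i j' :=
      Finset.sum_le_sum_of_subset_of_nonneg (Finset.filter_subset _ _)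
        (fun j' _ _ => (hbound i j').1)
    linarith
  constructor
  · have h2 : (∑ j' ∈ Finset.univ.filter (fun j' : Fin (J i) => j' ≤ j), ψ i j')
        ≤ z i (j.val + 1) - z i 0 := by
      rw [hfilter]; exact bnd j.val j.isLt
    rcases min_cases θ (z i (j.val + 1)) with ⟨h, _⟩ | ⟨h, _⟩ <;> rw [h] <;> linarith
  · rw [hfilter]; exact (tele j.val j.isLt).symm
end

section
/- There exists a subset Ψ̄' ⊆ Ψ'⋄ with R(Ψ̄') = Ψ such that for every affine map x' : ℝ^{N'} → ℝ^n (N' = J_1+…+J_I) satisfying A · x'(ψ') ≤ b(R(ψ')) componentwise for all ψ' ∈ Ψ'⋄, there exists an affine map x : ℝ^N → ℝ^n satisfying A · x(ξ) ≤ b(ξ) componentwise for all ξ ∈ Ψ, and moreover x'(ψ') = x(R(ψ')) for all ψ' ∈ Ψ̄'. (This is the single-support-set case G = 1; the correspondence x = x' ∘ F̄ ∘ E constructed in the proof also preserves the stage-wise non-anticipativity structure, which is omitted here.) -/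
/-- The Moore–Penrose left inverse `E⁺ = (EᵀE)⁻¹Eᵀ`. -/
noncomputable def pinv {I N : ℕ} (E : Matrix (Fin I) (Fin N) ℝ) :
    Matrix (Fin N) (Fin I) ℝ :=
  (E.transpose * E)⁻¹ * E.transpose

/-- The retraction operator `R = E⁺ ∘ F⁺`. -/
noncomputable def retrOp (I N : ℕ) (J : Fin I → ℕ) (z : (i : Fin I) → ℕ → ℝ)
    (E : Matrix (Fin I) (Fin N) ℝ) (ψ : (i : Fin I) → Fin (J i) → ℝ) : Fin N → ℝ :=
  (pinv E).mulVec (retr I J z ψ)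

/-- The outer approximation `Ψ'⋄ = {ψ' : F⁺(ψ') ∈ Θ} ∩ conv(F([θ̲,θ̄]))`. -/
noncomputable def PsiOuter (I : ℕ) (J : Fin I → ℕ) (z : (i : Fin I) → ℕ → ℝ)
    (Θ : Set (Fin I → ℝ)) : Set ((i : Fin I) → Fin (J i) → ℝ) :=
  {ψ | retr I J z ψ ∈ Θ} ∩
    convexHull ℝ (fold I J z '' Set.Icc (fun i => z i 0) (fun i => z i (J i)))

open Matrix

/-- Linear part of the proportional unfolding map. -/
noncomputable def FbarL (I : ℕ) (J : Fin I → ℕ) (z : (i : Fin I) → ℕ → ℝ) :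
    (Fin I → ℝ) →ₗ[ℝ] ((i : Fin I) → Fin (J i) → ℝ) where
  toFun θ := fun i j => (θ i / (z i (J i) - z i 0)) * (z i (j.val + 1) - z i j.val)
  map_add' θ₁ θ₂ := by funext i j; simp [add_div, add_mul]
  map_smul' c θ := by funext i j; simp [smul_eq_mul]; ring

/-- The proportional unfolding affine map `F̄`. -/
noncomputable def FbarA (I : ℕ) (J : Fin I → ℕ) (z : (i : Fin I) → ℕ → ℝ) :
    (Fin I → ℝ) →ᵃ[ℝ] ((i : Fin I) → Fin (J i) → ℝ) :=
  AffineMap.mk' (fun θ i j => ((θ i - z i 0) / (z i (J i) - z i 0)) * (z i (j.val + 1) - z i j.val))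
    (FbarL I J z) 0 (by
      intro θ; funext i j
      simp [FbarL]
      ring)

theorem stmt_7 (I N n m : ℕ) (J : Fin I → ℕ) (hJ : ∀ i, 1 ≤ J i)
    (z : (i : Fin I) → ℕ → ℝ)
    (hz : ∀ i, ∀ j, j < J i → z i j < z i (j + 1))
    (Ψ : Set (Fin N → ℝ)) (hΨne : Ψ.Nonempty) (hΨcomp : IsCompact Ψ)
    (E : Matrix (Fin I) (Fin N) ℝ) (hE : Function.Injective E.mulVec)
    (hΘbox : E.mulVec '' Ψ ⊆ Set.Icc (fun i => z i 0) (fun i => z i (J i)))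
    (A : Matrix (Fin m) (Fin n) ℝ)
    (b : (Fin N → ℝ) →ᵃ[ℝ] (Fin m → ℝ)) :
    ∃ Ψbar : Set ((i : Fin I) → Fin (J i) → ℝ),
      Ψbar ⊆ PsiOuter I J z (E.mulVec '' Ψ) ∧
      retrOp I N J z E '' Ψbar = Ψ ∧
      ∀ x' : ((i : Fin I) → Fin (J i) → ℝ) →ᵃ[ℝ] (Fin n → ℝ),
        (∀ ψ ∈ PsiOuter I J z (E.mulVec '' Ψ),
            A.mulVec (x' ψ) ≤ b (retrOp I N J z E ψ)) →
        ∃ x : (Fin N → ℝ) →ᵃ[ℝ] (Fin n → ℝ),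
          (∀ ξ ∈ Ψ, A.mulVec (x ξ) ≤ b ξ) ∧
          ∀ ψ ∈ Ψbar, x' ψ = x (retrOp I N J z E ψ) := by
  classical
  -- basic monotonicity of the breakpoints
  have zmono : ∀ (i : Fin I) (a b : ℕ), a ≤ b → b ≤ J i → z i a ≤ z i b := by
    intro i a b hab hb
    induction b with
    | zero => simp_all
    | succ k ih =>
      rcases Nat.lt_or_ge a (k+1) with h | h
      · exact le_trans (ih (Nat.lt_succ_iff.mp h) (le_trans (Nat.le_succ k) hb))
          (le_of_lt (hz i k (Nat.lt_of_succ_le hb)))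
      · have : a = k + 1 := le_antisymm hab h
        simp [this]
  have Dpos : ∀ i, 0 < z i (J i) - z i 0 := by
    intro i
    have h1 : z i 0 < z i 1 := hz i 0 (hJ i)
    have h2 : z i 1 ≤ z i (J i) := zmono i 1 (J i) (hJ i) le_rfl
    linarith
  have Dne : ∀ i, z i (J i) - z i 0 ≠ 0 := fun i => ne_of_gt (Dpos i)
  set lo : Fin I → ℝ := fun i => z i 0 with hlo
  set hi : Fin I → ℝ := fun i => z i (J i) with hhi
  set Fb := FbarA I J z with hFb
  have Fb_apply : ∀ θ i j, Fb θ i j =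
      ((θ i - z i 0) / (z i (J i) - z i 0)) * (z i (j.val + 1) - z i j.val) := by
    intro θ i j
    simp [hFb, FbarA, AffineMap.coe_mk']
  have dnonneg : ∀ (i : Fin I) (j : Fin (J i)), 0 ≤ z i (j.val + 1) - z i j.val := by
    intro i j
    have := hz i j.val j.isLt
    linarith
  have sumd : ∀ i, ∑ j : Fin (J i), (z i (j.val + 1) - z i j.val) = z i (J i) - z i 0 := by
    intro i
    rw [Fin.sum_univ_eq_sum_range (fun j => z i (j + 1) - z i j) (J i)]
    exact Finset.sum_range_sub (fun j => z i j) (J i)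
  -- retr ∘ Fb = id
  have retr_Fb : ∀ θ, retr I J z (Fb θ) = θ := by
    intro θ; funext i
    simp only [retr]
    rw [Finset.sum_congr rfl (fun j _ => Fb_apply θ i j), ← Finset.mul_sum, sumd i,
      div_mul_cancel₀ _ (Dne i)]
    ring
  -- pinv E * E = 1
  have hMinj : Function.Injective (E.transpose * E).mulVec := by
    intro v w hvw
    have hz0 : (E.transpose * E).mulVec (v - w) = 0 := by
      rw [Matrix.mulVec_sub, hvw, sub_self]
    have hdot : E.mulVec (v - w) ⬝ᵥ E.mulVec (v - w) = 0 := by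
      have : (v - w) ⬝ᵥ (E.transpose * E).mulVec (v - w) = E.mulVec (v - w) ⬝ᵥ E.mulVec (v - w) := by
        rw [← Matrix.mulVec_mulVec, Matrix.dotProduct_mulVec, Matrix.vecMul_transpose]
      rw [hz0] at this
      simpa using this.symm
    have hEv : E.mulVec (v - w) = 0 := by
      rwa [dotProduct_self_eq_zero] at hdot
    have : E.mulVec v = E.mulVec w := by
      have := sub_eq_zero.mp (by rwa [Matrix.mulVec_sub] at hEv)
      exact this
    exact sub_eq_zero.mp (by
      have h := hE this
      rw [h, sub_self])
  have hdet : (E.transpose * E).det ≠ 0 := by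
    intro h0
    obtain ⟨v, hv, hv0⟩ := (Matrix.exists_mulVec_eq_zero_iff).mpr h0
    apply hv
    apply hMinj
    rw [hv0, Matrix.mulVec_zero]
  have pinvE : pinv E * E = 1 := by
    rw [pinv, Matrix.mul_assoc]
    exact Matrix.nonsing_inv_mul _ (isUnit_iff_ne_zero.mpr hdet)
  have retrOp_Fb : ∀ ξ, retrOp I N J z E (Fb (E.mulVec ξ)) = ξ := by
    intro ξ
    simp only [retrOp, retr_Fb]
    rw [Matrix.mulVec_mulVec, pinvE, Matrix.one_mulVec]
  -- convex hull membership
  have conv_mem : ∀ θ ∈ Set.Icc lo hi,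
      Fb θ ∈ convexHull ℝ (fold I J z '' Set.Icc lo hi) := by
    intro θ hθ
    set t : Fin I → ℝ := fun i => (θ i - z i 0) / (z i (J i) - z i 0) with ht
    have ht01 : ∀ i, 0 ≤ t i ∧ t i ≤ 1 := by
      intro i
      constructor
      · apply div_nonneg _ (le_of_lt (Dpos i))
        have := hθ.1 i; simp [hlo] at this; linarith
      · rw [div_le_one (Dpos i)]
        have := hθ.2 i; simp [hhi] at this; linarith
    set w : Finset (Fin I) → ℝ := fun S => (∏ k ∈ S, t k) * ∏ k ∈ Sᶜ, (1 - t k) with hw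
    set v : Finset (Fin I) → ((i : Fin I) → Fin (J i) → ℝ) := fun S i j =>
      if i ∈ S then z i (j.val + 1) - z i j.val else 0 with hv
    have hw0 : ∀ S, 0 ≤ w S := by
      intro S
      apply mul_nonneg
      · exact Finset.prod_nonneg fun k _ => (ht01 k).1
      · exact Finset.prod_nonneg fun k _ => by linarith [(ht01 k).2]
    have hwsum : ∑ S : Finset (Fin I), w S = 1 := by
      have h := Finset.prod_add t (fun k => 1 - t k) (Finset.univ : Finset (Fin I))
      simp at h
      calc ∑ S : Finset (Fin I), w S
          = ∑ S : Finset (Fin I), (∏ k ∈ S, t k) * ∏ k ∈ Finset.univ \ S, (1 - t k) := by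
            apply Finset.sum_congr rfl
            intro S _
            rw [hw]
            simp only
            rw [Finset.compl_eq_univ_sdiff]
        _ = 1 := h.symm
    have hvmem : ∀ S, v S ∈ fold I J z '' Set.Icc lo hi := by
      intro S
      refine ⟨fun i => if i ∈ S then z i (J i) else z i 0, ?_, ?_⟩
      · constructor
        · intro i
          by_cases h : i ∈ S <;> simp [hlo, h]
          exact zmono i 0 (J i) (Nat.zero_le _) le_rfl
        · intro i
          by_cases h : i ∈ S <;> simp [hhi, h]
          exact zmono i 0 (J i) (Nat.zero_le _) le_rfl
      · funext i j
        by_cases h : i ∈ S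
        · simp only [fold, hv, h, if_true]
          have h1 : z i (j.val + 1) ≤ z i (J i) := zmono i (j.val + 1) (J i) j.isLt le_rfl
          have h2 : z i j.val ≤ z i (J i) := zmono i j.val (J i) (le_of_lt j.isLt) le_rfl
          rw [max_eq_left (by linarith)]
          exact min_eq_right (by linarith)
        · simp only [fold, hv, h, if_false]
          have h2 : z i 0 ≤ z i j.val := zmono i 0 j.val (Nat.zero_le _) (le_of_lt j.isLt)
          rw [max_eq_right (by linarith)]
          exact min_eq_left (dnonneg i j)
    -- marginal sums
    have hmarg : ∀ i : Fin I, ∑ S : Finset (Fin I), (if i ∈ S then w S else 0) = t i := by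
      intro i
      set a : Fin I → ℝ := t with ha
      set bb : Fin I → ℝ := fun k => if k = i then 0 else 1 - t k with hbb
      have step : ∀ S : Finset (Fin I), (if i ∈ S then w S else 0) =
          (∏ k ∈ S, a k) * ∏ k ∈ Sᶜ, bb k := by
        intro S
        by_cases h : i ∈ S
        · simp only [h, if_true, hw]
          congr 1
          apply Finset.prod_congr rfl
          intro k hk
          have : k ≠ i := by
            intro he; rw [he] at hk; exact (Finset.mem_compl.mp hk) h
          simp [hbb, this]
          rfl
        · simp only [h, if_false]
          rw [Finset.prod_eq_zero (Finset.mem_compl.mpr h) (by simp [hbb])]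
          ring
      rw [Finset.sum_congr rfl (fun S _ => step S)]
      have := Finset.prod_add a bb (Finset.univ : Finset (Fin I))
      simp at this
      have hsum : ∑ S : Finset (Fin I), (∏ k ∈ S, a k) * ∏ k ∈ Sᶜ, bb k =
          ∏ k : Fin I, (a k + bb k) := by
        rw [this]
        apply Finset.sum_congr rfl
        intro S _
        rw [Finset.compl_eq_univ_sdiff]
      rw [hsum]
      have : ∀ k : Fin I, a k + bb k = if k = i then t i else 1 := by
        intro k
        by_cases h : k = i <;> simp [ha, hbb, h]
      rw [Finset.prod_congr rfl (fun k _ => this k)]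
      simp
      rfl
    -- Fb θ is the center of mass
    have key : Fb θ = ∑ S : Finset (Fin I), w S • v S := by
      funext i j
      rw [Fb_apply]
      have : (∑ S : Finset (Fin I), w S • v S) i j = ∑ S : Finset (Fin I), w S * v S i j := by
        simp [Finset.sum_apply]
      rw [this]
      have : ∀ S : Finset (Fin I), w S * v S i j =
          (if i ∈ S then w S else 0) * (z i (j.val + 1) - z i j.val) := by
        intro S
        by_cases h : i ∈ S <;> simp [hv, h]
      rw [Finset.sum_congr rfl (fun S _ => this S), ← Finset.sum_mul, hmarg i]
    rw [key]
    have := Finset.centerMass_mem_convexHull (t := (Finset.univ : Finset (Finset (Fin I))))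
      (w := w) (z := v) (fun S _ => hw0 S) (by rw [hwsum]; norm_num) (fun S _ => hvmem S)
    rwa [Finset.centerMass_eq_of_sum_1 _ _ hwsum] at this
  -- assemble
  refine ⟨(fun ξ => Fb (E.mulVec ξ)) '' Ψ, ?_, ?_, ?_⟩
  · rintro ψ ⟨ξ, hξ, rfl⟩
    constructor
    · show retr I J z (Fb (E.mulVec ξ)) ∈ E.mulVec '' Ψ
      rw [retr_Fb]
      exact ⟨ξ, hξ, rfl⟩
    · exact conv_mem _ (hΘbox ⟨ξ, hξ, rfl⟩)
  · ext ξ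
    constructor
    · rintro ⟨ψ, ⟨ξ', hξ', rfl⟩, rfl⟩
      rw [retrOp_Fb]; exact hξ'
    · intro hξ
      exact ⟨Fb (E.mulVec ξ), ⟨ξ, hξ, rfl⟩, retrOp_Fb ξ⟩
  · intro x' hx'
    refine ⟨x'.comp (Fb.comp (Matrix.mulVecLin E).toAffineMap), ?_, ?_⟩
    · intro ξ hξ
      have hmem : Fb (E.mulVec ξ) ∈ PsiOuter I J z (E.mulVec '' Ψ) := by
        constructor
        · show retr I J z (Fb (E.mulVec ξ)) ∈ E.mulVec '' Ψ
          rw [retr_Fb]; exact ⟨ξ, hξ, rfl⟩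
        · exact conv_mem _ (hΘbox ⟨ξ, hξ, rfl⟩)
      have := hx' _ hmem
      rwa [retrOp_Fb] at this
    · rintro ψ ⟨ξ, hξ, rfl⟩
      rw [retrOp_Fb]
      rfl
end

section
/- For any cost vector c ∈ ℝ^n, the two affinely adjustable robust optimization problems attain the same optimal value: inf { sup_{ξ∈Ψ} cᵀ x(ξ) : x : ℝ^N → ℝ^n affine, A·x(ξ) ≤ b(ξ) for all ξ ∈ Ψ } = inf { sup_{ψ'∈Ψ'⋄} cᵀ x'(ψ') : x' : ℝ^{N'} → ℝ^n affine, A·x'(ψ') ≤ b(R(ψ')) for all ψ' ∈ Ψ'⋄ }, where both infima are taken over the respective sets of feasible affine maps (and equal +∞ if a feasible set is empty). -/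
open Matrix Set

private lemma minmax_eq (a p q : ℝ) (hpq : p ≤ q) :
    min (max (a - p) 0) (q - p) = min a q - min a p := by
  simp only [min_def, max_def]
  split_ifs <;> linarith

private lemma z_le {I : ℕ} {J : Fin I → ℕ} {z : (i : Fin I) → ℕ → ℝ}
    (hz : ∀ i, ∀ j, j < J i → z i j < z i (j + 1)) (i : Fin I) :
    ∀ b a, a ≤ b → b ≤ J i → z i a ≤ z i b := by
  intro b
  induction b with
  | zero => intro a ha _; simp [Nat.le_zero.1 ha]
  | succ k ih =>
    intro a ha hb
    rcases Nat.eq_or_lt_of_le ha with rfl | h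
    · exact le_rfl
    · exact (ih a (Nat.lt_succ_iff.1 h) (by omega)).trans (hz i k (by omega)).le

private lemma sum_d {I : ℕ} (J : Fin I → ℕ) (z : (i : Fin I) → ℕ → ℝ) (i : Fin I) :
    ∑ j : Fin (J i), (z i (j.val + 1) - z i j.val) = z i (J i) - z i 0 := by
  rw [Fin.sum_univ_eq_sum_range (fun j => z i (j + 1) - z i j), Finset.sum_range_sub]

private lemma pinv_mulVec {I N : ℕ} {E : Matrix (Fin I) (Fin N) ℝ}
    (hE : Function.Injective E.mulVec) (v : Fin N → ℝ) :
    (pinv E).mulVec (E.mulVec v) = v := by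
  have h0 : Function.Injective (Eᵀ * E).mulVec := by
    intro u w h
    have hx : (Eᵀ * E).mulVec (u - w) = 0 := by
      rw [Matrix.mulVec_sub, h, sub_self]
    have h2 : (E.mulVec (u - w)) ⬝ᵥ (E.mulVec (u - w)) = 0 := by
      have h3 := congrArg (fun y => dotProduct (u - w) y) hx
      simpa [← Matrix.mulVec_mulVec, Matrix.dotProduct_mulVec,
        Matrix.vecMul_transpose] using h3
    have hx0 : E.mulVec (u - w) = 0 := dotProduct_self_eq_zero.1 h2
    have : u - w = 0 := hE (by rw [hx0, Matrix.mulVec_zero])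
    exact sub_eq_zero.1 this
  have hU : IsUnit (Eᵀ * E) := Matrix.mulVec_injective_iff_isUnit.1 h0
  have hDet : IsUnit (Eᵀ * E).det := (Matrix.isUnit_iff_isUnit_det _).1 hU
  calc (pinv E).mulVec (E.mulVec v) = (((Eᵀ * E)⁻¹ * Eᵀ) * E).mulVec v := by
        rw [pinv, Matrix.mulVec_mulVec]
    _ = ((Eᵀ * E)⁻¹ * (Eᵀ * E)).mulVec v := by rw [Matrix.mul_assoc]
    _ = v := by rw [Matrix.nonsing_inv_mul _ hDet, Matrix.one_mulVec]

private lemma retr_fold {I : ℕ} {J : Fin I → ℕ} {z : (i : Fin I) → ℕ → ℝ}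
    (hz : ∀ i, ∀ j, j < J i → z i j < z i (j + 1))
    {θ : Fin I → ℝ} (hθ : θ ∈ Set.Icc (fun i => z i 0) (fun i => z i (J i))) :
    retr I J z (fold I J z θ) = θ := by
  funext i
  have hlb : z i 0 ≤ θ i := hθ.1 i
  have hub : θ i ≤ z i (J i) := hθ.2 i
  have key : ∑ j : Fin (J i), fold I J z θ i j = θ i - z i 0 := by
    calc ∑ j : Fin (J i), fold I J z θ i j
        = ∑ j : Fin (J i), (min (θ i) (z i (j.val + 1)) - min (θ i) (z i j.val)) :=
          Finset.sum_congr rfl (fun j _ => minmax_eq _ _ _ (hz i j.val j.isLt).le)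
      _ = ∑ j ∈ Finset.range (J i), (min (θ i) (z i (j + 1)) - min (θ i) (z i j)) :=
          Fin.sum_univ_eq_sum_range (fun j => min (θ i) (z i (j + 1)) - min (θ i) (z i j)) (J i)
      _ = min (θ i) (z i (J i)) - min (θ i) (z i 0) :=
          Finset.sum_range_sub (fun j => min (θ i) (z i j)) (J i)
      _ = θ i - z i 0 := by rw [min_eq_left hub, min_eq_right hlb]
  show z i 0 + ∑ j : Fin (J i), fold I J z θ i j = θ i
  rw [key]; ring

noncomputable def sumL (I : ℕ) (J : Fin I → ℕ) :
    ((i : Fin I) → Fin (J i) → ℝ) →ₗ[ℝ] (Fin I → ℝ) where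
  toFun ψ := fun i => ∑ j, ψ i j
  map_add' a b := by funext i; simp [Finset.sum_add_distrib]
  map_smul' r a := by funext i; simp [Finset.mul_sum]

noncomputable def Rmap (I N : ℕ) (J : Fin I → ℕ) (z : (i : Fin I) → ℕ → ℝ)
    (E : Matrix (Fin I) (Fin N) ℝ) :
    ((i : Fin I) → Fin (J i) → ℝ) →ᵃ[ℝ] (Fin N → ℝ) where
  toFun := retrOp I N J z E
  linear := (Matrix.mulVecLin (pinv E)).comp (sumL I J)
  map_vadd' p v := by
    show retrOp I N J z E (v + p)
        = (pinv E).mulVec (fun i => ∑ j, v i j) + retrOp I N J z E p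
    rw [retrOp, retrOp, ← Matrix.mulVec_add]
    have hre : retr I J z (v + p) = (fun i => ∑ j, v i j) + retr I J z p := by
      funext i
      show z i 0 + ∑ j, (v + p) i j = (∑ j, v i j) + (z i 0 + ∑ j, p i j)
      simp only [Pi.add_apply, Finset.sum_add_distrib]
      ring
    rw [hre]

noncomputable def Gmap (I N : ℕ) (J : Fin I → ℕ) (z : (i : Fin I) → ℕ → ℝ)
    (E : Matrix (Fin I) (Fin N) ℝ) :
    (Fin N → ℝ) →ᵃ[ℝ] ((i : Fin I) → Fin (J i) → ℝ) where
  toFun ξ := fun i j =>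
    (z i (j.val + 1) - z i j.val) / (z i (J i) - z i 0) * (E.mulVec ξ i - z i 0)
  linear :=
    { toFun := fun ξ => fun i j =>
        (z i (j.val + 1) - z i j.val) / (z i (J i) - z i 0) * (E.mulVec ξ i)
      map_add' := by intro a b; funext i j; simp [Matrix.mulVec_add]; ring
      map_smul' := by intro r a; funext i j; simp [Matrix.mulVec_smul]; ring }
  map_vadd' p v := by
    funext i j
    simp [Matrix.mulVec_add]
    ring

private lemma retr_Gmap {I N : ℕ} {J : Fin I → ℕ} {z : (i : Fin I) → ℕ → ℝ}
    (hJ : ∀ i, 1 ≤ J i) (hz : ∀ i, ∀ j, j < J i → z i j < z i (j + 1))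
    (E : Matrix (Fin I) (Fin N) ℝ) (ξ : Fin N → ℝ) :
    retr I J z (Gmap I N J z E ξ) = E.mulVec ξ := by
  funext i
  have hD : (0:ℝ) < z i (J i) - z i 0 :=
    sub_pos.2 (lt_of_lt_of_le (hz i 0 (hJ i)) (z_le hz i (J i) 1 (hJ i) le_rfl))
  show z i 0 + ∑ j : Fin (J i),
      (z i (j.val + 1) - z i j.val) / (z i (J i) - z i 0) * (E.mulVec ξ i - z i 0)
      = E.mulVec ξ i
  rw [← Finset.sum_mul, ← Finset.sum_div, sum_d, div_self (ne_of_gt hD), one_mul]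
  ring

private lemma fold_continuous (I : ℕ) (J : Fin I → ℕ) (z : (i : Fin I) → ℕ → ℝ) :
    Continuous (fold I J z) := by
  refine continuous_pi fun i => continuous_pi fun j => ?_
  exact (((continuous_apply i).sub continuous_const).max continuous_const).min
    continuous_const

private lemma Gmap_mem_hull {I N : ℕ} {J : Fin I → ℕ} {z : (i : Fin I) → ℕ → ℝ}
    (hJ : ∀ i, 1 ≤ J i) (hz : ∀ i, ∀ j, j < J i → z i j < z i (j + 1))
    (E : Matrix (Fin I) (Fin N) ℝ) (ξ : Fin N → ℝ)
    (hbox : E.mulVec ξ ∈ Set.Icc (fun i => z i 0) (fun i => z i (J i))) :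
    Gmap I N J z E ξ ∈
      convexHull ℝ (fold I J z '' Set.Icc (fun i => z i 0) (fun i => z i (J i))) := by
  classical
  set t : (i : Fin I) → Set (Fin (J i) → ℝ) := fun i =>
    (fun θi => fun j : Fin (J i) =>
      min (max (θi - z i j.val) 0) (z i (j.val + 1) - z i j.val)) ''
        Set.Icc (z i 0) (z i (J i)) with ht
  have hsub : Set.pi Set.univ t ⊆
      fold I J z '' Set.Icc (fun i => z i 0) (fun i => z i (J i)) := by
    intro ψ hψ
    choose θf hθf using fun i => hψ i (Set.mem_univ i)
    exact ⟨θf, ⟨fun i => (hθf i).1.1, fun i => (hθf i).1.2⟩, funext fun i => (hθf i).2⟩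
  refine convexHull_mono hsub (mem_convexHull_pi fun i _ => ?_)
  have hD : (0:ℝ) < z i (J i) - z i 0 :=
    sub_pos.2 (lt_of_lt_of_le (hz i 0 (hJ i)) (z_le hz i (J i) 1 (hJ i) le_rfl))
  set s := (E.mulVec ξ i - z i 0) / (z i (J i) - z i 0) with hs
  have hs0 : 0 ≤ s := div_nonneg (sub_nonneg.2 (hbox.1 i)) hD.le
  have hs1 : s ≤ 1 := (div_le_one hD).2 (by have := hbox.2 i; linarith)
  have hp : (fun j : Fin (J i) =>
      min (max (z i 0 - z i j.val) 0) (z i (j.val + 1) - z i j.val)) ∈ t i :=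
    ⟨z i 0, ⟨le_rfl, by linarith⟩, rfl⟩
  have hq : (fun j : Fin (J i) =>
      min (max (z i (J i) - z i j.val) 0) (z i (j.val + 1) - z i j.val)) ∈ t i :=
    ⟨z i (J i), ⟨by linarith, le_rfl⟩, rfl⟩
  have hcomb := (convex_convexHull ℝ (t i)) (subset_convexHull ℝ _ hp)
      (subset_convexHull ℝ _ hq) (by linarith : (0:ℝ) ≤ 1 - s) hs0 (by ring)
  convert hcomb using 2
  funext j
  have h01 : z i 0 ≤ z i j.val := z_le hz i j.val 0 (Nat.zero_le _) (le_of_lt j.isLt)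
  have hd : (0:ℝ) ≤ z i (j.val + 1) - z i j.val := sub_nonneg.2 (hz i j.val j.isLt).le
  have hj1 : z i (j.val + 1) ≤ z i (J i) := z_le hz i (J i) (j.val + 1) j.isLt le_rfl
  have h1 : min (max (z i 0 - z i j.val) 0) (z i (j.val + 1) - z i j.val) = 0 := by
    rw [max_eq_right (by linarith), min_eq_left hd]
  have h2 : min (max (z i (J i) - z i j.val) 0) (z i (j.val + 1) - z i j.val)
      = z i (j.val + 1) - z i j.val := by
    rw [max_eq_left (by linarith), min_eq_right (by linarith)]
  show (z i (j.val + 1) - z i j.val) / (z i (J i) - z i 0) * (E.mulVec ξ i - z i 0)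
      = ((1 - s) • (fun j : Fin (J i) =>
          min (max (z i 0 - z i j.val) 0) (z i (j.val + 1) - z i j.val))
        + s • (fun j : Fin (J i) =>
          min (max (z i (J i) - z i j.val) 0) (z i (j.val + 1) - z i j.val))) j
  simp only [Pi.add_apply, Pi.smul_apply, smul_eq_mul, h1, h2, hs]
  field_simp
  ring

theorem stmt_8 (I N n m : ℕ) (J : Fin I → ℕ) (hJ : ∀ i, 1 ≤ J i)
    (z : (i : Fin I) → ℕ → ℝ)
    (hz : ∀ i, ∀ j, j < J i → z i j < z i (j + 1))
    (Ψ : Set (Fin N → ℝ)) (hΨne : Ψ.Nonempty) (hΨcomp : IsCompact Ψ)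
    (E : Matrix (Fin I) (Fin N) ℝ) (hE : Function.Injective E.mulVec)
    (hΘbox : E.mulVec '' Ψ ⊆ Set.Icc (fun i => z i 0) (fun i => z i (J i)))
    (A : Matrix (Fin m) (Fin n) ℝ)
    (b : (Fin N → ℝ) →ᵃ[ℝ] (Fin m → ℝ))
    (c : Fin n → ℝ) :
    (⨅ x : {x : (Fin N → ℝ) →ᵃ[ℝ] (Fin n → ℝ) // ∀ ξ ∈ Ψ, A.mulVec (x ξ) ≤ b ξ},
        ((sSup ((fun ξ => dotProduct c (x.1 ξ)) '' Ψ) : ℝ) : EReal)) =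
    (⨅ x' : {x' : ((i : Fin I) → Fin (J i) → ℝ) →ᵃ[ℝ] (Fin n → ℝ) //
        ∀ ψ ∈ PsiOuter I J z (E.mulVec '' Ψ),
          A.mulVec (x'.1 ψ) ≤ b (retrOp I N J z E ψ)},
        ((sSup ((fun ψ => dotProduct c (x'.1 ψ)) '' PsiOuter I J z (E.mulVec '' Ψ)) : ℝ) : EReal)) := by
  have hbox : ∀ ξ ∈ Ψ, E.mulVec ξ ∈ Set.Icc (fun i => z i 0) (fun i => z i (J i)) :=
    fun ξ hξ => hΘbox ⟨ξ, hξ, rfl⟩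
  have hGmem : ∀ ξ ∈ Ψ, Gmap I N J z E ξ ∈ PsiOuter I J z (E.mulVec '' Ψ) := by
    intro ξ hξ
    refine ⟨?_, Gmap_mem_hull hJ hz E ξ (hbox ξ hξ)⟩
    show retr I J z (Gmap I N J z E ξ) ∈ E.mulVec '' Ψ
    rw [retr_Gmap hJ hz]
    exact ⟨ξ, hξ, rfl⟩
  have hRG : ∀ ξ, retrOp I N J z E (Gmap I N J z E ξ) = ξ := fun ξ => by
    rw [retrOp, retr_Gmap hJ hz, pinv_mulVec hE]
  have hmemΨ : ∀ ψ ∈ PsiOuter I J z (E.mulVec '' Ψ), retrOp I N J z E ψ ∈ Ψ := by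
    intro ψ hψ
    obtain ⟨ξ, hξ, hEξ⟩ := hψ.1
    rw [retrOp, ← hEξ, pinv_mulVec hE]
    exact hξ
  have hfoldmem : ∀ ξ ∈ Ψ, fold I J z (E.mulVec ξ) ∈ PsiOuter I J z (E.mulVec '' Ψ) := by
    intro ξ hξ
    refine ⟨?_, subset_convexHull ℝ _ ⟨E.mulVec ξ, hbox ξ hξ, rfl⟩⟩
    show retr I J z (fold I J z (E.mulVec ξ)) ∈ E.mulVec '' Ψ
    rw [retr_fold hz (hbox ξ hξ)]
    exact ⟨ξ, hξ, rfl⟩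
  have hfoldR : ∀ ξ ∈ Ψ, retrOp I N J z E (fold I J z (E.mulVec ξ)) = ξ := by
    intro ξ hξ
    rw [retrOp, retr_fold hz (hbox ξ hξ), pinv_mulVec hE]
  apply le_antisymm
  · refine le_iInf fun x' => ?_
    have hfeas : ∀ ξ ∈ Ψ, A.mulVec ((x'.1.comp (Gmap I N J z E)) ξ) ≤ b ξ := by
      intro ξ hξ
      have h := x'.2 _ (hGmem ξ hξ)
      rwa [hRG ξ] at h
    refine iInf_le_of_le ⟨x'.1.comp (Gmap I N J z E), hfeas⟩ ?_
    rw [EReal.coe_le_coe_iff]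
    have hKc : IsCompact
        (fold I J z '' Set.Icc (fun i => z i 0) (fun i => z i (J i))) :=
      (isCompact_Icc).image (fold_continuous I J z)
    set dotL : (Fin n → ℝ) →ₗ[ℝ] ℝ :=
      { toFun := fun w => dotProduct c w
        map_add' := fun u v => dotProduct_add c u v
        map_smul' := fun r u => by simp [dotProduct_smul] } with hdotL
    set φ : ((i : Fin I) → Fin (J i) → ℝ) →ᵃ[ℝ] ℝ := dotL.toAffineMap.comp x'.1 with hφ
    have hφc : Continuous φ := φ.continuous_of_finiteDimensional
    have hφeq : (fun ψ => dotProduct c (x'.1 ψ)) = ⇑φ := rfl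
    have hconv : ConvexOn ℝ Set.univ ⇑φ :=
      ⟨convex_univ, fun a _ u _ s t hs htt hst => le_of_eq (Convex.combo_affine_apply hst)⟩
    have hbdd2 : BddAbove (⇑φ '' convexHull ℝ
        (fold I J z '' Set.Icc (fun i => z i 0) (fun i => z i (J i)))) :=
      hconv.bddAbove_convexHull (Set.subset_univ _) ((hKc.image hφc).bddAbove)
    have hbdd : BddAbove ((fun ψ => dotProduct c (x'.1 ψ)) ''
        PsiOuter I J z (E.mulVec '' Ψ)) := by
      rw [hφeq]
      exact BddAbove.mono (Set.image_mono Set.inter_subset_right) hbdd2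
    refine csSup_le_csSup hbdd (hΨne.image _) ?_
    rintro r ⟨ξ, hξ, rfl⟩
    exact ⟨Gmap I N J z E ξ, hGmem ξ hξ, rfl⟩
  · refine le_iInf fun x => ?_
    have hfeas : ∀ ψ ∈ PsiOuter I J z (E.mulVec '' Ψ),
        A.mulVec ((x.1.comp (Rmap I N J z E)) ψ) ≤ b (retrOp I N J z E ψ) := by
      intro ψ hψ
      exact x.2 _ (hmemΨ ψ hψ)
    refine iInf_le_of_le ⟨x.1.comp (Rmap I N J z E), hfeas⟩ ?_
    have himg : (fun ψ => dotProduct c ((x.1.comp (Rmap I N J z E)) ψ)) ''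
          PsiOuter I J z (E.mulVec '' Ψ)
        = (fun ξ => dotProduct c (x.1 ξ)) '' Ψ := by
      ext r
      constructor
      · rintro ⟨ψ, hψ, rfl⟩
        exact ⟨retrOp I N J z E ψ, hmemΨ ψ hψ, rfl⟩
      · rintro ⟨ξ, hξ, rfl⟩
        refine ⟨fold I J z (E.mulVec ξ), hfoldmem ξ hξ, ?_⟩
        show dotProduct c
            (x.1 (Rmap I N J z E (fold I J z (E.mulVec ξ)))) = _
        rw [show Rmap I N J z E (fold I J z (E.mulVec ξ))
            = retrOp I N J z E (fold I J z (E.mulVec ξ)) from rfl, hfoldR ξ hξ]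
    show ((sSup ((fun ψ => dotProduct c ((x.1.comp (Rmap I N J z E)) ψ)) ''
        PsiOuter I J z (E.mulVec '' Ψ)) : ℝ) : EReal)
        ≤ ((sSup ((fun ξ => dotProduct c (x.1 ξ)) '' Ψ) : ℝ) : EReal)
    rw [himg]
end

section
/- Let (V, E) be a finite connected undirected graph with n vertices and m edges and vertex–edge incidence matrix W ∈ {0,1}^{n×m}. Then the minimum vertex cover value min { eᵀy : Wᵀy ≥ e, y ∈ {0,1}^n } equals the optimal value of the mixed program min { 2eᵀy − eᵀδ : Wᵀy ≥ e, y ≥ δ, y ≥ 0, y ∈ ℝ^n, δ ∈ {0,1}^n }, where e denotes the all-ones vector of appropriate dimension and all inequalities are componentwise. -/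
open scoped Classical in
/-- Minimum vertex cover equals the optimal value of the mixed program
`min { 2eᵀy − eᵀδ : Wᵀy ≥ e, y ≥ δ, y ≥ 0, δ ∈ {0,1}ⁿ }`. -/
theorem stmt_9 (n m : ℕ) (G : SimpleGraph (Fin n)) (hconn : G.Connected)
    (e : Fin m ≃ G.edgeSet)
    (W : Matrix (Fin n) (Fin m) ℝ)
    (hW : ∀ v k, W v k = if v ∈ (e k : Sym2 (Fin n)) then (1 : ℝ) else 0) :
    sInf {val : ℝ | ∃ y : Fin n → ℝ, (∀ v, y v = 0 ∨ y v = 1) ∧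
        (∀ k, 1 ≤ ∑ v, W v k * y v) ∧ val = ∑ v, y v} =
    sInf {val : ℝ | ∃ y δ : Fin n → ℝ, (∀ k, 1 ≤ ∑ v, W v k * y v) ∧
        (∀ v, δ v ≤ y v) ∧ (∀ v, 0 ≤ y v) ∧ (∀ v, δ v = 0 ∨ δ v = 1) ∧
        val = 2 * ∑ v, y v - ∑ v, δ v} := by
  classical
  -- key: every column of W sums two distinct endpoints
  have key : ∀ k : Fin m, ∃ u w : Fin n, u ≠ w ∧
      ∀ g : Fin n → ℝ, ∑ v, W v k * g v = g u + g w := by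
    intro k
    obtain ⟨⟨u, w⟩, huw⟩ := Quot.exists_rep (e k : Sym2 (Fin n))
    have hsk : (e k : Sym2 (Fin n)) = s(u, w) := huw.symm
    have hadj : G.Adj u w := by
      have h2 := (e k).2
      rw [hsk] at h2
      exact h2
    refine ⟨u, w, hadj.ne, fun g => ?_⟩
    have hstep : ∀ v ∈ Finset.univ, W v k * g v
        = if v ∈ ({u, w} : Finset (Fin n)) then g v else 0 := by
      intro v _
      rw [hW, hsk]
      by_cases h : v = u ∨ v = w <;>
        simp [Sym2.mem_iff, Finset.mem_insert, Finset.mem_singleton, h]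
    rw [Finset.sum_congr rfl hstep, Finset.sum_ite_mem, Finset.univ_inter,
      Finset.sum_pair hadj.ne]
  set S1 : Set ℝ := {val : ℝ | ∃ y : Fin n → ℝ, (∀ v, y v = 0 ∨ y v = 1) ∧
      (∀ k, 1 ≤ ∑ v, W v k * y v) ∧ val = ∑ v, y v} with hS1
  set S2 : Set ℝ := {val : ℝ | ∃ y δ : Fin n → ℝ, (∀ k, 1 ≤ ∑ v, W v k * y v) ∧
      (∀ v, δ v ≤ y v) ∧ (∀ v, 0 ≤ y v) ∧ (∀ v, δ v = 0 ∨ δ v = 1) ∧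
      val = 2 * ∑ v, y v - ∑ v, δ v} with hS2
  have hsub : S1 ⊆ S2 := by
    rintro x ⟨y, h01, hcov, hval⟩
    refine ⟨y, y, hcov, fun v => le_refl _, fun v => ?_, h01, by rw [hval]; ring⟩
    rcases h01 v with h | h <;> rw [h] <;> norm_num
  have hne1 : S1.Nonempty := by
    refine ⟨∑ v : Fin n, (1 : ℝ), fun _ => 1, fun v => Or.inr rfl, fun k => ?_, rfl⟩
    obtain ⟨u, w, -, hsum⟩ := key k
    rw [hsum]; norm_num
  have hbdd1 : BddBelow S1 := by
    refine ⟨0, ?_⟩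
    rintro x ⟨y, h01, -, hval⟩
    rw [hval]
    apply Finset.sum_nonneg
    intro v _
    rcases h01 v with h | h <;> rw [h] <;> norm_num
  have hbdd2 : BddBelow S2 := by
    refine ⟨0, ?_⟩
    rintro x ⟨y, δ, -, hδy, hy0, -, hval⟩
    rw [hval, sub_nonneg, two_mul]
    have : ∑ v, δ v ≤ ∑ v, y v := Finset.sum_le_sum fun v _ => hδy v
    have h0 : (0:ℝ) ≤ ∑ v, y v := Finset.sum_nonneg fun v _ => hy0 v
    linarith
  apply le_antisymm
  · -- sInf S1 ≤ sInf S2 : round any S2 point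
    apply le_csInf (hne1.mono hsub)
    rintro b ⟨y, δ, hcov, hδy, hy0, hδ01, hval⟩
    set y' : Fin n → ℝ := fun v => if (1:ℝ)/2 ≤ y v then 1 else 0 with hy'
    have hpos : ∀ v, (1:ℝ)/2 ≤ y v → y' v = 1 := fun v h => if_pos h
    have hneg : ∀ v, ¬ (1:ℝ)/2 ≤ y v → y' v = 0 := fun v h => if_neg h
    have h01' : ∀ v, y' v = 0 ∨ y' v = 1 := by
      intro v
      by_cases h : (1:ℝ)/2 ≤ y v
      · exact Or.inr (hpos v h)
      · exact Or.inl (hneg v h)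
    have hy'0 : ∀ v, (0:ℝ) ≤ y' v := by
      intro v; rcases h01' v with h | h <;> rw [h] <;> norm_num
    have hcov' : ∀ k, 1 ≤ ∑ v, W v k * y' v := by
      intro k
      obtain ⟨u, w, -, hsum⟩ := key k
      have h1 := hcov k
      rw [hsum] at h1 ⊢
      have hor : (1:ℝ)/2 ≤ y u ∨ (1:ℝ)/2 ≤ y w := by
        by_contra h
        push_neg at h
        linarith [h.1, h.2]
      rcases hor with h | h
      · rw [hpos u h]; linarith [hy'0 w]
      · rw [hpos w h]; linarith [hy'0 u]
    have hle : ∀ v, y' v ≤ 2 * y v - δ v := by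
      intro v
      rcases hδ01 v with h | h
      · rw [h]
        by_cases hc : (1:ℝ)/2 ≤ y v
        · rw [hpos v hc]; linarith
        · rw [hneg v hc]; linarith [hy0 v]
      · have h1 : (1:ℝ) ≤ y v := h ▸ hδy v
        rw [h, hpos v (by linarith)]
        linarith
    calc sInf S1 ≤ ∑ v, y' v := csInf_le hbdd1 ⟨y', h01', hcov', rfl⟩
      _ ≤ ∑ v, (2 * y v - δ v) := Finset.sum_le_sum fun v _ => hle v
      _ = b := by rw [hval, Finset.sum_sub_distrib, ← Finset.mul_sum]
  · exact csInf_le_csInf hbdd2 hne1 hsub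
end

section
/- Let (V, E) be a finite connected undirected graph with n vertices and incidence matrix W ∈ {0,1}^{n×m}. Then the mixed program min { 2eᵀy − eᵀδ : Wᵀy ≥ e, y ≥ δ, y ≥ 0, y ∈ ℝ^n, δ ∈ {0,1}^n } admits an optimal solution (y, δ) in which y is binary, i.e., y ∈ {0,1}^n. -/
open scoped Classical

private lemma sum_ite_pair' {n : ℕ} (a b : Fin n) (hab : a ≠ b) (y : Fin n → ℝ) :
    ∑ v, (if v = a ∨ v = b then (1:ℝ) else 0) * y v = y a + y b := by
  have h : ∀ v : Fin n, (if v = a ∨ v = b then (1:ℝ) else 0) * y v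
      = if v ∈ ({a, b} : Finset (Fin n)) then y v else 0 := by
    intro v
    by_cases h : v = a ∨ v = b <;> simp [h, Finset.mem_insert]
  rw [Finset.sum_congr rfl (fun v _ => h v), Finset.sum_ite_mem, Finset.univ_inter,
    Finset.sum_pair hab]

open scoped Classical in
/-- The mixed program `min { 2eᵀy − eᵀδ : Wᵀy ≥ e, y ≥ δ, y ≥ 0, δ ∈ {0,1}ⁿ }`
admits an optimal solution in which `y` is binary. -/
theorem stmt_10 (n m : ℕ) (G : SimpleGraph (Fin n)) (hconn : G.Connected)
    (e : Fin m ≃ G.edgeSet)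
    (W : Matrix (Fin n) (Fin m) ℝ)
    (hW : ∀ v k, W v k = if v ∈ (e k : Sym2 (Fin n)) then (1 : ℝ) else 0) :
    ∃ y δ : Fin n → ℝ,
      (∀ k, 1 ≤ ∑ v, W v k * y v) ∧ (∀ v, δ v ≤ y v) ∧ (∀ v, 0 ≤ y v) ∧
      (∀ v, δ v = 0 ∨ δ v = 1) ∧ (∀ v, y v = 0 ∨ y v = 1) ∧
      ∀ y' δ' : Fin n → ℝ,
        (∀ k, 1 ≤ ∑ v, W v k * y' v) → (∀ v, δ' v ≤ y' v) → (∀ v, 0 ≤ y' v) →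
        (∀ v, δ' v = 0 ∨ δ' v = 1) →
        2 * ∑ v, y v - ∑ v, δ v ≤ 2 * ∑ v, y' v - ∑ v, δ' v := by
  classical
  -- general computation of the edge sums
  have hsum : ∀ (z : Fin n → ℝ) (k : Fin m) (a b : Fin n),
      (e k : Sym2 (Fin n)) = s(a, b) → a ≠ b → ∑ v, W v k * z v = z a + z b := by
    intro z k a b hek hab
    have : ∀ v : Fin n, W v k * z v = (if v = a ∨ v = b then (1:ℝ) else 0) * z v := by
      intro v
      rw [hW v k, hek]
      simp only [Sym2.mem_iff]
    rw [Finset.sum_congr rfl (fun v _ => this v), sum_ite_pair' a b hab z]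
  -- from the constraints, edge inequalities
  have key : ∀ (z : Fin n → ℝ), (∀ k, 1 ≤ ∑ v, W v k * z v) →
      ∀ a b : Fin n, G.Adj a b → 1 ≤ z a + z b := by
    intro z hz a b hab
    set k := e.symm ⟨s(a, b), G.mem_edgeSet.mpr hab⟩ with hk
    have hek : (e k : Sym2 (Fin n)) = s(a, b) := by
      rw [hk, Equiv.apply_symm_apply]
    have := hz k
    rwa [hsum z k a b hek hab.ne] at this
  -- minimum vertex cover
  set 𝒞 : Finset (Finset (Fin n)) :=
    Finset.univ.filter (fun C => ∀ a b : Fin n, G.Adj a b → a ∈ C ∨ b ∈ C) with h𝒞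
  have hne : 𝒞.Nonempty := ⟨Finset.univ, by simp [h𝒞]⟩
  obtain ⟨C, hC, hCmin⟩ := 𝒞.exists_min_image Finset.card hne
  have hCcov : ∀ a b : Fin n, G.Adj a b → a ∈ C ∨ b ∈ C := by
    rw [h𝒞, Finset.mem_filter] at hC
    exact hC.2
  set y : Fin n → ℝ := fun v => if v ∈ C then 1 else 0 with hy
  have hy0 : ∀ v, 0 ≤ y v := by
    intro v; rw [hy]; dsimp only; split_ifs <;> norm_num
  have hysum : ∑ v, y v = (C.card : ℝ) := by
    rw [hy]; simp [Finset.sum_ite_mem]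
  refine ⟨y, y, ?_, fun v => le_refl _, hy0, ?_, ?_, ?_⟩
  · -- feasibility
    intro k
    obtain ⟨⟨a, b⟩, hab⟩ := Quot.exists_rep (e k : Sym2 (Fin n))
    have hek : (e k : Sym2 (Fin n)) = s(a, b) := hab.symm
    have hadj : G.Adj a b := by
      have := (e k).2
      rw [hek, G.mem_edgeSet] at this
      exact this
    rw [hsum y k a b hek hadj.ne]
    rcases hCcov a b hadj with h | h
    · have : y a = 1 := by rw [hy]; simp [h]
      have := hy0 b; linarith
    · have : y b = 1 := by rw [hy]; simp [h]
      have := hy0 a; linarith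
  · intro v; rw [hy]; dsimp only; split_ifs <;> simp
  · intro v; rw [hy]; dsimp only; split_ifs <;> simp
  · -- optimality
    intro y' δ' hcons hδy hy0' hδ01
    set S : Finset (Fin n) := Finset.univ.filter (fun v => (1:ℝ)/2 ≤ y' v) with hS
    have hScov : S ∈ 𝒞 := by
      rw [h𝒞, Finset.mem_filter]
      refine ⟨Finset.mem_univ _, fun a b hab => ?_⟩
      have h1 := key y' hcons a b hab
      by_contra hcontra
      push_neg at hcontra
      obtain ⟨ha, hb⟩ := hcontra
      rw [hS, Finset.mem_filter] at ha hb
      push_neg at ha hb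
      have ha' := ha (Finset.mem_univ a)
      have hb' := hb (Finset.mem_univ b)
      linarith
    have hcard : C.card ≤ S.card := hCmin S hScov
    have hterm : ∀ v ∈ S, (1:ℝ) ≤ 2 * y' v - δ' v := by
      intro v hv
      rw [hS, Finset.mem_filter] at hv
      have h2 := hv.2
      rcases hδ01 v with h | h
      · linarith
      · have := hδy v; linarith
    have hterm2 : ∀ v, v ∉ S → (0:ℝ) ≤ 2 * y' v - δ' v := by
      intro v hv
      rw [hS, Finset.mem_filter] at hv
      push_neg at hv
      have hv' := hv (Finset.mem_univ v)
      rcases hδ01 v with h | h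
      · have := hy0' v; linarith
      · have := hδy v; linarith
    have hmain : (S.card : ℝ) ≤ ∑ v, (2 * y' v - δ' v) := by
      calc (S.card : ℝ) = ∑ _v ∈ S, (1:ℝ) := by simp
        _ ≤ ∑ v ∈ S, (2 * y' v - δ' v) := Finset.sum_le_sum hterm
        _ ≤ ∑ v, (2 * y' v - δ' v) :=
            Finset.sum_le_sum_of_subset_of_nonneg (Finset.subset_univ S)
              (fun v _ hv => hterm2 v hv)
    have hsplit : ∑ v, (2 * y' v - δ' v) = 2 * ∑ v, y' v - ∑ v, δ' v := by
      rw [Finset.sum_sub_distrib, Finset.mul_sum]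
    have hcast : (C.card : ℝ) ≤ (S.card : ℝ) := by exact_mod_cast hcard
    rw [hysum]
    linarith
end

section
/- Let Θ ⊆ ℝ^I be nonempty, compact, convex, and signed-permutation invariant. Then for every i ∈ [I] there exists λ ∈ ℝ such that the vector λ·(e_1 + … + e_i) (equal to λ in the first i coordinates and 0 elsewhere) belongs to Θ and i·λ = η(i). -/
/-- `Θ` is invariant under signed permutations of the coordinates. -/
def SignedPermInvariant (I : ℕ) (Θ : Set (Fin I → ℝ)) : Prop :=
  ∀ (σ : Equiv.Perm (Fin I)) (ε : Fin I → ℝ), (∀ i, ε i = 1 ∨ ε i = -1) →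
    ∀ θ ∈ Θ, (fun i => ε i * θ (σ i)) ∈ Θ

/-- `eta I Θ i` is the maximal ℓ1-norm of the first `i` components over `Θ`. -/
noncomputable def eta (I : ℕ) (Θ : Set (Fin I → ℝ)) (i : ℕ) : ℝ :=
  sSup ((fun θ => ∑ i' ∈ Finset.univ.filter (fun i' : Fin I => (i' : ℕ) < i), |θ i'|) '' Θ)

lemma min_sq_unique {I : ℕ} (x y : Fin I → ℝ)
    (hmin : ∑ j, (x j)^2 ≤ ∑ j, ((x j + y j)/2)^2)
    (heq : ∑ j, (y j)^2 = ∑ j, (x j)^2) : y = x := by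
  have hs : ∑ j, ((x j + y j)/2)^2 + ∑ j, ((x j - y j)/2)^2 = ∑ j, (x j)^2 := by
    rw [← Finset.sum_add_distrib]
    have h1 : ∀ j ∈ (Finset.univ : Finset (Fin I)),
        ((x j + y j)/2)^2 + ((x j - y j)/2)^2 = ((x j)^2 + (y j)^2)/2 := fun j _ => by ring
    rw [Finset.sum_congr rfl h1, ← Finset.sum_div, Finset.sum_add_distrib, heq]
    ring
  have hnn : ∀ j ∈ (Finset.univ : Finset (Fin I)), (0:ℝ) ≤ ((x j - y j)/2)^2 :=
    fun j _ => sq_nonneg _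
  have hzero : ∑ j, ((x j - y j)/2)^2 = 0 :=
    le_antisymm (by linarith) (Finset.sum_nonneg hnn)
  funext j
  have h0 := (Finset.sum_eq_zero_iff_of_nonneg hnn).mp hzero j (Finset.mem_univ j)
  have : (x j - y j)/2 = 0 := by
    have := pow_eq_zero_iff (n := 2) (by norm_num) |>.mp h0
    exact this
  linarith [this]

theorem stmt_11 (I : ℕ) (Θ : Set (Fin I → ℝ))
    (hne : Θ.Nonempty) (hcomp : IsCompact Θ) (hconv : Convex ℝ Θ)
    (hSPI : SignedPermInvariant I Θ) :
    ∀ i : ℕ, 1 ≤ i → i ≤ I →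
      ∃ lam : ℝ, (fun i' : Fin I => if (i' : ℕ) < i then lam else 0) ∈ Θ ∧
        (i : ℝ) * lam = eta I Θ i := by
  intro i hi1 hiI
  set s : Finset (Fin I) := Finset.univ.filter (fun i' : Fin I => (i' : ℕ) < i) with hs
  have hmem_s : ∀ m : Fin I, m ∈ s ↔ (m : ℕ) < i := by
    intro m; simp [hs]
  set f : (Fin I → ℝ) → ℝ := fun θ => ∑ i' ∈ s, |θ i'| with hfdef
  set g : (Fin I → ℝ) → ℝ := fun θ => ∑ i' ∈ s, θ i' with hgdef
  have hfc : Continuous f :=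
    continuous_finset_sum _ (fun j _ => continuous_abs.comp (continuous_apply j))
  have hgc : Continuous g :=
    continuous_finset_sum _ (fun j _ => continuous_apply j)
  set c : ℝ := eta I Θ i with hc
  have heta : c = sSup (f '' Θ) := by
    rw [hc, eta, hfdef, hs]
  have himg : IsCompact (f '' Θ) := hcomp.image hfc
  have hcmem : c ∈ f '' Θ := by
    rw [heta]; exact himg.sSup_mem (hne.image f)
  have hub : ∀ θ ∈ Θ, f θ ≤ c := by
    intro θ hθ
    rw [heta]
    exact le_csSup himg.bddAbove ⟨θ, hθ, rfl⟩
  obtain ⟨θ₀, hθ₀mem, hθ₀⟩ := hcmem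
  -- flip signs to get a point with plain sum = c
  set ε₀ : Fin I → ℝ := fun j => if θ₀ j < 0 then -1 else 1 with hε₀
  have hε₀pm : ∀ j, ε₀ j = 1 ∨ ε₀ j = -1 := by
    intro j; by_cases h : θ₀ j < 0 <;> simp [hε₀, h]
  have hθ₁mem : (fun j => ε₀ j * θ₀ ((Equiv.refl (Fin I)) j)) ∈ Θ :=
    hSPI (Equiv.refl _) ε₀ hε₀pm θ₀ hθ₀mem
  set θ₁ : Fin I → ℝ := fun j => ε₀ j * θ₀ ((Equiv.refl (Fin I)) j) with hθ₁
  have hθ₁j : ∀ j, θ₁ j = |θ₀ j| := by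
    intro j
    by_cases h : θ₀ j < 0
    · simp [hθ₁, hε₀, h, abs_of_neg h]
    · simp [hθ₁, hε₀, h, abs_of_nonneg (not_lt.mp h)]
  have hgθ₁ : g θ₁ = c := by
    rw [hgdef]
    simp only
    rw [Finset.sum_congr rfl (fun j _ => hθ₁j j)]
    exact hθ₀
  -- the face F
  set F : Set (Fin I → ℝ) := Θ ∩ {θ | g θ = c} with hF
  have hFconv : Convex ℝ F := by
    apply hconv.inter
    intro p hp q hq a b ha hb hab
    simp only [Set.mem_setOf_eq] at hp hq ⊢
    have : g (a • p + b • q) = a * g p + b * g q := by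
      simp only [hgdef, Pi.add_apply, Pi.smul_apply, smul_eq_mul]
      rw [Finset.sum_add_distrib, Finset.mul_sum, Finset.mul_sum]
    rw [this, hp, hq]
    ring_nf
    linear_combination c * hab
  have hFcomp : IsCompact F := hcomp.inter_right (isClosed_eq hgc continuous_const)
  have hFne : F.Nonempty := ⟨θ₁, hθ₁mem, hgθ₁⟩
  -- minimizer of sum of squares over F
  set h : (Fin I → ℝ) → ℝ := fun θ => ∑ j, (θ j)^2 with hhdef
  have hhc : Continuous h :=
    continuous_finset_sum _ (fun j _ => (continuous_apply j).pow 2)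
  obtain ⟨x, hxF, hxmin⟩ := hFcomp.exists_isMinOn hFne hhc.continuousOn
  -- uniqueness at the minimum
  have key : ∀ y : Fin I → ℝ, y ∈ F → h y = h x → y = x := by
    intro y hyF heq
    have hmid : (1/2 : ℝ) • x + (1/2 : ℝ) • y ∈ F :=
      hFconv hxF hyF (by norm_num) (by norm_num) (by norm_num)
    have hle : h x ≤ h ((1/2 : ℝ) • x + (1/2 : ℝ) • y) := hxmin hmid
    have hmidval : h ((1/2 : ℝ) • x + (1/2 : ℝ) • y) = ∑ j, ((x j + y j)/2)^2 := by
      simp only [hhdef, Pi.add_apply, Pi.smul_apply, smul_eq_mul]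
      exact Finset.sum_congr rfl (fun j _ => by ring)
    rw [hmidval] at hle
    simp only [hhdef] at hle heq
    exact min_sq_unique x y hle heq
  -- fact (a): coordinates below i are all equal
  have facta : ∀ j k : Fin I, (j : ℕ) < i → (k : ℕ) < i → x j = x k := by
    intro j k hj hk
    set σ : Equiv.Perm (Fin I) := Equiv.swap j k with hσ
    have hymem : (fun m => (1:ℝ) * x (σ m)) ∈ Θ :=
      hSPI σ (fun _ => 1) (fun _ => Or.inl rfl) x hxF.1
    have hσs : ∀ m : Fin I, m ∈ s ↔ σ m ∈ s := by
      intro m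
      rw [hmem_s, hmem_s, hσ]
      rcases eq_or_ne m j with rfl | hmj
      · rw [Equiv.swap_apply_left]; exact ⟨fun _ => hk, fun _ => hj⟩
      · rcases eq_or_ne m k with rfl | hmk
        · rw [Equiv.swap_apply_right]; exact ⟨fun _ => hj, fun _ => hk⟩
        · rw [Equiv.swap_apply_of_ne_of_ne hmj hmk]
    have hgy : g (fun m => (1:ℝ) * x (σ m)) = c := by
      have : g (fun m => (1:ℝ) * x (σ m)) = g x := by
        simp only [hgdef, one_mul]
        exact Finset.sum_equiv σ hσs (fun m _ => rfl)
      rw [this]; exact hxF.2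
    have hhy : h (fun m => (1:ℝ) * x (σ m)) = h x := by
      simp only [hhdef, one_mul]
      exact Equiv.sum_comp σ (fun m => (x m)^2)
    have := key _ ⟨hymem, hgy⟩ hhy
    have := congrFun this j
    simp only [one_mul, hσ, Equiv.swap_apply_left] at this
    exact this.symm
  -- fact (b): coordinates ≥ i are zero
  have factb : ∀ j₀ : Fin I, ¬ ((j₀ : ℕ) < i) → x j₀ = 0 := by
    intro j₀ hj₀
    set ε : Fin I → ℝ := fun m => if m = j₀ then -1 else 1 with hε
    have hεpm : ∀ m, ε m = 1 ∨ ε m = -1 := by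
      intro m; by_cases h : m = j₀ <;> simp [hε, h]
    have hymem : (fun m => ε m * x ((Equiv.refl (Fin I)) m)) ∈ Θ :=
      hSPI (Equiv.refl _) ε hεpm x hxF.1
    have hgy : g (fun m => ε m * x ((Equiv.refl (Fin I)) m)) = c := by
      have : g (fun m => ε m * x ((Equiv.refl (Fin I)) m)) = g x := by
        simp only [hgdef, Equiv.refl_apply]
        refine Finset.sum_congr rfl (fun m hm => ?_)
        have hmne : m ≠ j₀ := by
          intro hcontra; rw [hmem_s] at hm; exact hj₀ (hcontra ▸ hm)
        simp [hε, hmne]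
      rw [this]; exact hxF.2
    have hhy : h (fun m => ε m * x ((Equiv.refl (Fin I)) m)) = h x := by
      simp only [hhdef, Equiv.refl_apply]
      refine Finset.sum_congr rfl (fun m _ => ?_)
      rcases hεpm m with h1 | h1 <;> rw [h1] <;> ring
    have := key _ ⟨hymem, hgy⟩ hhy
    have := congrFun this j₀
    simp only [Equiv.refl_apply, hε, if_pos rfl] at this
    linarith
  -- assemble
  have h0i : 0 < i := hi1
  have h0I : 0 < I := lt_of_lt_of_le h0i hiI
  set j₀ : Fin I := ⟨0, h0I⟩ with hj₀def
  have hj₀lt : (j₀ : ℕ) < i := h0i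
  refine ⟨x j₀, ?_, ?_⟩
  · have hxeq : (fun i' : Fin I => if (i' : ℕ) < i then x j₀ else 0) = x := by
      funext m
      by_cases hm : (m : ℕ) < i
      · simp only [if_pos hm]; exact facta j₀ m hj₀lt hm
      · simp only [if_neg hm]; exact (factb m hm).symm
    rw [hxeq]; exact hxF.1
  · have hcard : s.card = i := by
      have : s = Finset.map (Fin.castLEEmb hiI) Finset.univ := by
        ext m
        rw [hmem_s]
        simp only [Finset.mem_map, Finset.mem_univ, true_and]
        constructor
        · intro hm; exact ⟨⟨m, hm⟩, by simp [Fin.castLEEmb]⟩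
        · rintro ⟨k, rfl⟩
          simp
      rw [this, Finset.card_map, Finset.card_univ, Fintype.card_fin]
    have hsum : g x = (i : ℝ) * x j₀ := by
      rw [hgdef]
      simp only
      rw [Finset.sum_congr rfl (fun m hm => facta m j₀ ((hmem_s m).mp hm) hj₀lt),
        Finset.sum_const, hcard, nsmul_eq_mul]
    rw [← hsum]
    exact hxF.2
end

section
/- Let Θ ⊆ ℝ^I be nonempty, compact, convex, and signed-permutation invariant, and let z⁺ ∈ ℝ^I satisfy 0 ≤ z⁺_1 ≤ z⁺_2 ≤ … ≤ z⁺_I and z⁺_1 ≤ η(1). Then the maximal ℓ1-distance from Θ to the symmetric box [−z⁺, z⁺] admits the closed form d̄(Θ, [−z⁺, z⁺]) = max over i ∈ [I] of ( η(i) − Σ_{i'=1}^{i} z⁺_{i'} ). -/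
/-- Maximal ℓ1-distance from `Θ` to the box `[zm, zp]`. -/
noncomputable def dbar (I : ℕ) (Θ : Set (Fin I → ℝ)) (zm zp : Fin I → ℝ) : ℝ :=
  sSup ((fun θ => l1dist I θ zm zp) '' Θ)

/- ### Auxiliary lemmas -/

lemma aux_fin_strictMono_le {k I : ℕ} (f : Fin k → Fin I) (hf : StrictMono f) (m : Fin k) :
    (m : ℕ) ≤ (f m : ℕ) := by
  suffices h : ∀ n : ℕ, ∀ m : Fin k, (m:ℕ) = n → n ≤ (f m : ℕ) from h _ m rfl
  intro n
  induction n with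
  | zero => simp
  | succ n ih =>
    intro m hm
    have hlt : (⟨n, by omega⟩ : Fin k) < m := by rw [Fin.lt_def]; simp; omega
    have h1 : f ⟨n, by omega⟩ < f m := hf hlt
    have h2 := ih ⟨n, by omega⟩ rfl
    rw [Fin.lt_def] at h1
    omega

lemma aux_card_filter_lt (I k : ℕ) (hk : k ≤ I) :
    (Finset.univ.filter (fun j : Fin I => (j:ℕ) < k)).card = k := by
  apply Finset.card_eq_of_bijective (fun n h => ⟨n, by omega⟩)
  · intro a ha
    simp at ha
    exact ⟨a, ha, rfl⟩
  · intro n h; simp [h]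
  · intro m n hm hn h
    simpa [Fin.mk.injEq] using h

lemma aux_sum_fin_initial {I k : ℕ} (hk : k ≤ I) (g : Fin I → ℝ) :
    ∑ j ∈ Finset.univ.filter (fun j : Fin I => (j:ℕ) < k), g j
      = ∑ m : Fin k, g ⟨m, by omega⟩ := by
  symm
  apply Finset.sum_nbij (fun m : Fin k => (⟨(m:ℕ), by omega⟩ : Fin I))
  · intro m _; simp [m.2]
  · intro a _ b _ h
    simpa [Fin.ext_iff] using h
  · intro a ha
    simp only [Finset.coe_filter, Set.mem_setOf_eq, Finset.mem_coe, Finset.mem_filter] at ha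
    exact ⟨⟨(a:ℕ), ha.2⟩, by simp, by simp⟩
  · intro m _; rfl

lemma aux_sum_initial_le {I : ℕ} (zp : Fin I → ℝ) (hmono : Monotone zp) (S : Finset (Fin I)) :
    ∑ j ∈ Finset.univ.filter (fun j : Fin I => (j:ℕ) < S.card), zp j ≤ ∑ i ∈ S, zp i := by
  have hk : S.card ≤ I := by simpa using Finset.card_le_card (Finset.subset_univ S)
  set k := S.card with hkdef
  let e := S.orderEmbOfFin (rfl : S.card = k)
  have hmle : ∀ m : Fin k, (m:ℕ) ≤ (e m : ℕ) := fun m => aux_fin_strictMono_le e e.strictMono m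
  have h1 : ∑ i ∈ S, zp i = ∑ m : Fin k, zp (e m) := by
    symm
    apply Finset.sum_nbij e
    · intro m _; exact S.orderEmbOfFin_mem rfl m
    · intro a _ b _ h; exact e.injective h
    · intro a ha
      have : a ∈ Set.range e := by rw [Finset.range_orderEmbOfFin]; exact_mod_cast ha
      obtain ⟨m, hm⟩ := this
      exact ⟨m, by simp, hm⟩
    · intro m _; rfl
  rw [h1, aux_sum_fin_initial hk]
  apply Finset.sum_le_sum
  intro m _
  exact hmono (by simpa [Fin.le_def] using hmle m)

lemma aux_sum_abs_le_eta {I : ℕ} {Θ : Set (Fin I → ℝ)} (hSPI : SignedPermInvariant I Θ)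
    {θ : Fin I → ℝ} (hθ : θ ∈ Θ) (S : Finset (Fin I))
    (hbdd : BddAbove ((fun θ => ∑ i' ∈ Finset.univ.filter
      (fun i' : Fin I => (i' : ℕ) < S.card), |θ i'|) '' Θ)) :
    ∑ i ∈ S, |θ i| ≤ eta I Θ S.card := by
  classical
  have hk : S.card ≤ I := by simpa using Finset.card_le_card (Finset.subset_univ S)
  set k := S.card with hkdef
  set T : Finset (Fin I) := Finset.univ.filter (fun j : Fin I => (j:ℕ) < k) with hT
  have hTcard : T.card = k := aux_card_filter_lt I k hk
  have hcards : T.card = S.card := by rw [hTcard]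
  have hcardc : Tᶜ.card = Sᶜ.card := by
    simp [Finset.card_compl, hcards]
  let eT : {x // x ∈ T} ≃ {x // x ∈ S} := Finset.equivOfCardEq hcards
  let eC : {x // ¬ x ∈ T} ≃ {x // ¬ x ∈ S} :=
    ((Equiv.subtypeEquivRight (fun x => (Finset.mem_compl).symm)).trans
      (Finset.equivOfCardEq hcardc)).trans
      (Equiv.subtypeEquivRight (fun x => Finset.mem_compl))
  let σ : Equiv.Perm (Fin I) := Equiv.subtypeCongr eT eC
  have hmem : ∀ x (h : x ∈ T), σ x = (eT ⟨x, h⟩ : Fin I) := by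
    intro x h
    simp [σ, Equiv.subtypeCongr, h]
  have hmem' : ∀ x (h : ¬ x ∈ T), σ x = (eC ⟨x, h⟩ : Fin I) := by
    intro x h
    simp [σ, Equiv.subtypeCongr, h]
  have hmapsto : ∀ x ∈ T, σ x ∈ S := by
    intro x h; rw [hmem x h]; exact (eT ⟨x, h⟩).2
  have hmapsout : ∀ x, x ∉ T → σ x ∉ S := by
    intro x h; rw [hmem' x h]; exact (eC ⟨x, h⟩).2
  have hsum : ∑ i ∈ S, |θ i| = ∑ j ∈ T, |θ (σ j)| := by
    symm
    apply Finset.sum_nbij σ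
    · exact hmapsto
    · intro a _ b _ h; exact σ.injective h
    · intro a ha
      refine ⟨σ.symm a, ?_, by simp⟩
      simp only [Finset.mem_coe]
      by_contra hc
      exact hmapsout _ hc (by simpa using ha)
    · intro m _; rfl
  have hθσ : (fun i => (1:ℝ) * θ (σ i)) ∈ Θ := hSPI σ (fun _ => 1) (fun _ => Or.inl rfl) θ hθ
  have hle : ∑ j ∈ T, |θ (σ j)| ≤ eta I Θ k := by
    have := le_csSup hbdd (Set.mem_image_of_mem _ hθσ)
    simp only [one_mul] at this
    exact this
  rw [hsum]; exact hle

lemma aux_clamp_abs (a z : ℝ) (hz : 0 ≤ z) :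
    |a - max (-z) (min z a)| = max (|a| - z) 0 := by
  rcases le_total a (-z) with h | h
  · rw [min_eq_right (by linarith), max_eq_left (by linarith)]
    rw [abs_of_nonpos (by linarith), abs_of_nonpos (by linarith),
      max_eq_left (by linarith)]
    ring
  · rcases le_total a z with h2 | h2
    · rw [min_eq_right h2, max_eq_right h, sub_self, abs_zero]
      have : |a| ≤ z := abs_le.mpr ⟨by linarith, h2⟩
      rw [max_eq_right (by linarith)]
    · rw [min_eq_left h2, max_eq_right (by linarith)]
      rw [abs_of_nonneg (by linarith), abs_of_nonneg (by linarith),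
        max_eq_left (by linarith)]

lemma aux_l1dist_box (I : ℕ) (θ zp : Fin I → ℝ) (hnn : ∀ i, 0 ≤ zp i) :
    l1dist I θ (fun i => -(zp i)) zp = ∑ i, max (|θ i| - zp i) 0 := by
  set proj : Fin I → ℝ := fun i => max (-(zp i)) (min (zp i) (θ i)) with hproj
  have hmem : proj ∈ Set.Icc (fun i => -(zp i)) zp := by
    constructor
    · intro i; exact le_max_left _ _
    · intro i
      exact max_le (by linarith [hnn i]) (min_le_left _ _)
  have hval : (fun θ' => ∑ i, |θ i - θ' i|) proj = ∑ i, max (|θ i| - zp i) 0 :=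
    Finset.sum_congr rfl fun i _ => aux_clamp_abs (θ i) (zp i) (hnn i)
  have hlb : ∀ y ∈ (fun θ' => ∑ i, |θ i - θ' i|) '' Set.Icc (fun i => -(zp i)) zp,
      ∑ i, max (|θ i| - zp i) 0 ≤ y := by
    rintro y ⟨θ', hθ', rfl⟩
    apply Finset.sum_le_sum
    intro i _
    apply max_le _ (abs_nonneg _)
    have h1 : |θ' i| ≤ zp i := abs_le.mpr ⟨hθ'.1 i, hθ'.2 i⟩
    have h2 : |θ i| ≤ |θ i - θ' i| + |θ' i| := by
      calc |θ i| = |(θ i - θ' i) + θ' i| := by ring_nf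
        _ ≤ |θ i - θ' i| + |θ' i| := abs_add_le _ _
    linarith
  apply le_antisymm
  · exact csInf_le ⟨_, hlb⟩ ⟨proj, hmem, hval⟩
  · exact le_csInf ⟨_, ⟨proj, hmem, hval⟩⟩ hlb

/- ### Main theorem -/

theorem stmt_14 (I : ℕ) (hI : 0 < I) (Θ : Set (Fin I → ℝ))
    (hne : Θ.Nonempty) (hcomp : IsCompact Θ) (hconv : Convex ℝ Θ)
    (hSPI : SignedPermInvariant I Θ)
    (zp : Fin I → ℝ) (hnn : ∀ i, 0 ≤ zp i) (hmono : Monotone zp)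
    (hfirst : zp ⟨0, hI⟩ ≤ eta I Θ 1) :
    dbar I Θ (fun i => -(zp i)) zp =
      ⨆ i : Fin I, (eta I Θ ((i : ℕ) + 1) -
        ∑ i' ∈ Finset.univ.filter (fun i' : Fin I => i' ≤ i), zp i') := by
  classical
  have hFinNe : Nonempty (Fin I) := ⟨⟨0, hI⟩⟩
  set F : (Fin I → ℝ) → ℝ := fun θ => ∑ i, max (|θ i| - zp i) 0 with hF
  set g : Fin I → ℝ := fun i => eta I Θ ((i : ℕ) + 1) -
    ∑ i' ∈ Finset.univ.filter (fun i' : Fin I => i' ≤ i), zp i' with hg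
  -- continuity facts
  have hcontEta : ∀ n : ℕ, Continuous (fun θ : Fin I → ℝ =>
      ∑ i' ∈ Finset.univ.filter (fun i' : Fin I => (i' : ℕ) < n), |θ i'|) := by
    intro n
    exact continuous_finset_sum _ fun i _ => (continuous_apply i).abs
  have hbddEta : ∀ n : ℕ, BddAbove ((fun θ : Fin I → ℝ =>
      ∑ i' ∈ Finset.univ.filter (fun i' : Fin I => (i' : ℕ) < n), |θ i'|) '' Θ) :=
    fun n => (hcomp.image (hcontEta n)).bddAbove
  have hcontF : Continuous F := by
    apply continuous_finset_sum
    intro i _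
    exact (((continuous_apply i).abs.sub continuous_const).max continuous_const)
  have hbddF : BddAbove (F '' Θ) := (hcomp.image hcontF).bddAbove
  have hbddg : BddAbove (Set.range g) := (Set.finite_range g).bddAbove
  -- eta attainment
  have hetaAtt : ∀ n : ℕ, ∃ θ ∈ Θ,
      (∑ i' ∈ Finset.univ.filter (fun i' : Fin I => (i' : ℕ) < n), |θ i'|) = eta I Θ n := by
    intro n
    obtain ⟨θs, hθs, hmax⟩ := hcomp.exists_isMaxOn hne (hcontEta n).continuousOn
    refine ⟨θs, hθs, le_antisymm (le_csSup (hbddEta n) (Set.mem_image_of_mem _ hθs)) ?_⟩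
    apply csSup_le (hne.image _)
    rintro y ⟨x, hx, rfl⟩
    exact hmax hx
  -- rewrite dbar with F
  have hdbar : dbar I Θ (fun i => -(zp i)) zp = sSup (F '' Θ) := by
    unfold dbar
    congr 1
    apply Set.image_congr'
    intro θ
    exact aux_l1dist_box I θ zp hnn
  rw [hdbar]
  apply le_antisymm
  · -- sSup (F '' Θ) ≤ ⨆ i, g i
    apply csSup_le (hne.image _)
    rintro y ⟨θ, hθ, rfl⟩
    set S : Finset (Fin I) := Finset.univ.filter (fun i => zp i < |θ i|) with hS
    have hkI : S.card ≤ I := by simpa using Finset.card_le_card (Finset.subset_univ S)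
    have hFθ : F θ = ∑ i ∈ S, (|θ i| - zp i) := by
      show ∑ i, max (|θ i| - zp i) 0 = ∑ i ∈ S, (|θ i| - zp i)
      rw [← Finset.sum_filter_add_sum_filter_not Finset.univ (fun i => zp i < |θ i|)
        (fun i => max (|θ i| - zp i) 0)]
      have h2 : ∑ i ∈ Finset.univ.filter (fun i => ¬ zp i < |θ i|),
          max (|θ i| - zp i) 0 = 0 := by
        apply Finset.sum_eq_zero
        intro i hi
        simp only [Finset.mem_filter, not_lt] at hi
        exact max_eq_right (by linarith [hi.2])
      rw [h2, add_zero]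
      apply Finset.sum_congr rfl
      intro i hi
      simp only [hS, Finset.mem_filter] at hi
      exact max_eq_left (by linarith [hi.2])
    rcases Nat.eq_zero_or_pos S.card with hk0 | hkpos
    · -- S is empty
      have hSempty : S = ∅ := Finset.card_eq_zero.mp hk0
      have hF0 : F θ = 0 := by rw [hFθ, hSempty, Finset.sum_empty]
      have hfilter0 : Finset.univ.filter (fun i' : Fin I => i' ≤ (⟨0, hI⟩ : Fin I))
          = {(⟨0, hI⟩ : Fin I)} := by
        ext i'
        simp only [Finset.mem_filter, Finset.mem_univ, true_and, Finset.mem_singleton]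
        constructor
        · intro h
          have h' : (i' : ℕ) ≤ 0 := Fin.le_def.mp h
          exact Fin.ext (Nat.le_zero.mp h')
        · intro h; rw [h]
      have hg0 : 0 ≤ g ⟨0, hI⟩ := by
        show 0 ≤ eta I Θ (((⟨0, hI⟩ : Fin I) : ℕ) + 1) -
          ∑ i' ∈ Finset.univ.filter (fun i' : Fin I => i' ≤ (⟨0, hI⟩ : Fin I)), zp i'
        rw [hfilter0, Finset.sum_singleton]
        have h1 : ((⟨0, hI⟩ : Fin I) : ℕ) + 1 = 1 := by simp
        rw [h1]
        linarith [hfirst]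
      rw [hF0]
      exact le_trans hg0 (le_ciSup hbddg ⟨0, hI⟩)
    · -- S nonempty, card = k ≥ 1
      set k := S.card with hkdef
      set i₀ : Fin I := ⟨k - 1, by omega⟩ with hi₀
      have hfilterEq : Finset.univ.filter (fun i' : Fin I => i' ≤ i₀)
          = Finset.univ.filter (fun j : Fin I => (j : ℕ) < k) := by
        ext i'
        simp only [Finset.mem_filter, Finset.mem_univ, true_and]
        rw [Fin.le_def]
        simp only [hi₀]
        omega
      have hsub : F θ = ∑ i ∈ S, |θ i| - ∑ i ∈ S, zp i := by
        rw [hFθ, Finset.sum_sub_distrib]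
      have h1 : ∑ i ∈ S, |θ i| ≤ eta I Θ k := aux_sum_abs_le_eta hSPI hθ S (hbddEta k)
      have h2 : ∑ j ∈ Finset.univ.filter (fun j : Fin I => (j:ℕ) < k), zp j
          ≤ ∑ i ∈ S, zp i := aux_sum_initial_le zp hmono S
      have hgi : g i₀ = eta I Θ k -
          ∑ j ∈ Finset.univ.filter (fun j : Fin I => (j:ℕ) < k), zp j := by
        show eta I Θ ((i₀ : ℕ) + 1) -
            ∑ i' ∈ Finset.univ.filter (fun i' : Fin I => i' ≤ i₀), zp i' = _
        rw [hfilterEq]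
        congr 2
        show (k - 1) + 1 = k
        omega
      have : F θ ≤ g i₀ := by rw [hsub, hgi]; linarith
      exact le_trans this (le_ciSup hbddg i₀)
  · -- ⨆ i, g i ≤ sSup (F '' Θ)
    apply ciSup_le
    intro i
    obtain ⟨θs, hθs, hatt⟩ := hetaAtt ((i : ℕ) + 1)
    have hfilterEq : Finset.univ.filter (fun i' : Fin I => i' ≤ i)
        = Finset.univ.filter (fun j : Fin I => (j : ℕ) < (i : ℕ) + 1) := by
      ext i'
      simp only [Finset.mem_filter, Finset.mem_univ, true_and]
      rw [Fin.le_def]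
      omega
    have hkey : g i ≤ F θs := by
      show eta I Θ ((i : ℕ) + 1) -
          ∑ i' ∈ Finset.univ.filter (fun i' : Fin I => i' ≤ i), zp i' ≤
          ∑ i', max (|θs i'| - zp i') 0
      rw [hfilterEq, ← hatt, ← Finset.sum_sub_distrib]
      calc ∑ i' ∈ Finset.univ.filter (fun j : Fin I => (j : ℕ) < (i : ℕ) + 1),
            (|θs i'| - zp i')
          ≤ ∑ i' ∈ Finset.univ.filter (fun j : Fin I => (j : ℕ) < (i : ℕ) + 1),
            max (|θs i'| - zp i') 0 :=
            Finset.sum_le_sum fun i' _ => le_max_left _ _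
        _ ≤ ∑ i', max (|θs i'| - zp i') 0 := by
            apply Finset.sum_le_sum_of_subset_of_nonneg (Finset.filter_subset _ _)
            intro i' _ _
            exact le_max_right _ _
    exact le_trans hkey (le_csSup hbddF (Set.mem_image_of_mem _ hθs))
end

section
/- Let Θ ⊆ ℝ^I be nonempty, compact and signed-permutation invariant, and let z⁺ ∈ ℝ^I satisfy 0 ≤ z⁺_1 ≤ z⁺_2 ≤ … ≤ z⁺_I. Then there exists a maximizer θ* of θ ↦ d(θ, [−z⁺, z⁺]) over Θ that is nonnegative and arranged in nonascending order, i.e., θ*_1 ≥ θ*_2 ≥ … ≥ θ*_I ≥ 0. -/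
lemma fin_sm_le {k I : ℕ} (f : Fin k → Fin I) (hf : StrictMono f) (j : Fin k) :
    (j : ℕ) ≤ (f j : ℕ) := by
  induction' hn : (j : ℕ) with n ih generalizing j
  · exact Nat.zero_le _
  · have hjk := j.isLt
    have hn' : n < k := by omega
    have hlt : (⟨n, hn'⟩ : Fin k) < j := by simp [Fin.lt_def, hn]
    have h1 := hf hlt
    have h2 := ih ⟨n, hn'⟩ rfl
    rw [Fin.lt_def] at h1
    omega

/-- bottom-k sum for a monotone function is at most the sum over any
set of cardinality k. -/
lemma sum_firstk_le {I : ℕ} (z : Fin I → ℝ) (hz : Monotone z) (T : Finset (Fin I))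
    {k : ℕ} (hk : T.card = k) (hkI : k ≤ I) :
    ∑ j : Fin k, z (Fin.castLE hkI j) ≤ ∑ i ∈ T, z i := by
  have himg : Finset.image (T.orderEmbOfFin hk) Finset.univ = T := by
    apply Finset.coe_injective
    rw [Finset.coe_image, Finset.coe_univ, Set.image_univ, Finset.range_orderEmbOfFin]
  have h1 : ∑ j : Fin k, z (T.orderEmbOfFin hk j) = ∑ i ∈ T, z i := by
    rw [← Finset.sum_image (fun a _ b _ h => (T.orderEmbOfFin hk).injective h), himg]
  rw [← h1]
  apply Finset.sum_le_sum
  intro j _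
  apply hz
  rw [Fin.le_def]
  exact le_trans (by simp) (fin_sm_le _ (T.orderEmbOfFin hk).strictMono j)

/-- top-k sum for an antitone function is at least the sum over any
set of cardinality k. -/
lemma sum_le_firstk {I : ℕ} (a : Fin I → ℝ) (ha : Antitone a) (T : Finset (Fin I))
    {k : ℕ} (hk : T.card = k) (hkI : k ≤ I) :
    ∑ i ∈ T, a i ≤ ∑ j : Fin k, a (Fin.castLE hkI j) := by
  have := sum_firstk_le (fun i => -(a i)) (fun x y hxy => neg_le_neg (ha hxy)) T hk hkI
  simp only [Finset.sum_neg_distrib] at this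
  linarith

/-- The rearrangement inequality for sums of positive parts. -/
lemma rearrange {I : ℕ} (a z : Fin I → ℝ) (ha : Antitone a) (hz : Monotone z)
    (π : Equiv.Perm (Fin I)) :
    ∑ i, max (a (π i) - z i) 0 ≤ ∑ i, max (a i - z i) 0 := by
  set T : Finset (Fin I) := Finset.univ.filter (fun i => 0 < a (π i) - z i) with hT
  have hkI : T.card ≤ I := le_trans (Finset.card_le_univ T) (by simp)
  have h1 : ∑ i, max (a (π i) - z i) 0 = ∑ i ∈ T, (a (π i) - z i) := by
    rw [hT, Finset.sum_filter]
    apply Finset.sum_congr rfl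
    intro i _
    by_cases h : 0 < a (π i) - z i
    · simp [h, max_eq_left h.le]
    · simp [h, max_eq_right (not_lt.mp h)]
  have hcardimg : (T.image π).card = T.card :=
    Finset.card_image_of_injective T π.injective
  have h2 : ∑ i ∈ T, a (π i) = ∑ i ∈ T.image π, a i :=
    (Finset.sum_image (fun x _ y _ h => π.injective h)).symm
  have h3 : ∑ i ∈ T.image π, a i ≤ ∑ j : Fin T.card, a (Fin.castLE hkI j) :=
    sum_le_firstk a ha (T.image π) hcardimg hkI
  have h4 : ∑ j : Fin T.card, z (Fin.castLE hkI j) ≤ ∑ i ∈ T, z i :=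
    sum_firstk_le z hz T rfl hkI
  have h5 : ∑ j : Fin T.card, (a (Fin.castLE hkI j) - z (Fin.castLE hkI j))
      ≤ ∑ i, max (a i - z i) 0 := by
    calc ∑ j : Fin T.card, (a (Fin.castLE hkI j) - z (Fin.castLE hkI j))
        ≤ ∑ j : Fin T.card, max (a (Fin.castLE hkI j) - z (Fin.castLE hkI j)) 0 :=
          Finset.sum_le_sum (fun j _ => le_max_left _ _)
      _ = ∑ i ∈ Finset.univ.image (Fin.castLE hkI), max (a i - z i) 0 :=
          (Finset.sum_image (f := fun i => max (a i - z i) 0)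
            (fun x _ y _ h => Fin.castLE_injective hkI h)).symm
      _ ≤ ∑ i, max (a i - z i) 0 :=
          Finset.sum_le_sum_of_subset_of_nonneg (Finset.subset_univ _)
            (fun i _ _ => le_max_right _ _)
  rw [h1, Finset.sum_sub_distrib, h2]
  have := Finset.sum_sub_distrib (s := (Finset.univ : Finset (Fin T.card)))
    (f := fun j => a (Fin.castLE hkI j)) (g := fun j => z (Fin.castLE hkI j))
  linarith

/-- Closed form of the ℓ1 distance to the symmetric box. -/
lemma l1dist_eq {I : ℕ} (θ zp : Fin I → ℝ) (hnn : ∀ i, 0 ≤ zp i) :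
    l1dist I θ (fun i => -(zp i)) zp = ∑ i, max (|θ i| - zp i) 0 := by
  set p : Fin I → ℝ := fun i => max (-(zp i)) (min (θ i) (zp i)) with hpdef
  have hp : p ∈ Set.Icc (fun i => -(zp i)) zp := by
    constructor
    · intro i; exact le_max_left _ _
    · intro i
      exact max_le (by linarith [hnn i]) (min_le_right _ _)
  have key : ∀ i, |θ i - p i| = max (|θ i| - zp i) 0 := by
    intro i
    have hc := hnn i
    simp only [hpdef]
    rcases le_total (θ i) (-(zp i)) with h1 | h1
    · rw [min_eq_left (by linarith), max_eq_left h1, abs_of_nonpos (by linarith),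
        abs_of_nonpos (by linarith), max_eq_left (by linarith)]
      ring
    · rcases le_total (θ i) (zp i) with h2 | h2
      · rw [min_eq_left h2, max_eq_right h1, sub_self, abs_zero,
          max_eq_right (by cases abs_cases (θ i) <;> linarith)]
      · rw [min_eq_right h2, max_eq_right (by linarith),
          abs_of_nonneg (by linarith), abs_of_nonneg (by linarith),
          max_eq_left (by linarith)]
  have hsum : ∑ i, |θ i - p i| = ∑ i, max (|θ i| - zp i) 0 :=
    Finset.sum_congr rfl (fun i _ => key i)
  unfold l1dist
  apply le_antisymm
  · apply csInf_le
    · refine ⟨0, ?_⟩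
      rintro x ⟨θ', _, rfl⟩
      positivity
    · exact ⟨p, hp, hsum⟩
  · apply le_csInf
    · exact ⟨_, ⟨p, hp, rfl⟩⟩
    rintro x ⟨θ', hθ', rfl⟩
    apply Finset.sum_le_sum
    intro i _
    have h1 : |θ' i| ≤ zp i := abs_le.mpr ⟨hθ'.1 i, hθ'.2 i⟩
    have h2 := abs_sub_abs_le_abs_sub (θ i) (θ' i)
    exact max_le (by linarith) (abs_nonneg _)

theorem stmt_15 (I : ℕ) (Θ : Set (Fin I → ℝ))
    (hne : Θ.Nonempty) (hcomp : IsCompact Θ)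
    (hSPI : SignedPermInvariant I Θ)
    (zp : Fin I → ℝ) (hnn : ∀ i, 0 ≤ zp i) (hmono : Monotone zp) :
    ∃ θs ∈ Θ, (∀ i, 0 ≤ θs i) ∧ Antitone θs ∧
      ∀ θ ∈ Θ, l1dist I θ (fun i => -(zp i)) zp ≤ l1dist I θs (fun i => -(zp i)) zp := by
  have hf : Continuous (fun θ : Fin I → ℝ => ∑ i, max (|θ i| - zp i) 0) := by
    apply continuous_finset_sum
    intro i _
    exact ((continuous_abs.comp (continuous_apply i)).sub continuous_const).max
      continuous_const
  obtain ⟨θ₀, hθ₀Θ, hmax⟩ := hcomp.exists_isMaxOn hne hf.continuousOn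
  set g : Fin I → ℝ := fun i => -|θ₀ i| with hg
  set σ := Tuple.sort g with hσ
  set θs : Fin I → ℝ := fun i => |θ₀ (σ i)| with hθs
  have hσmono : Monotone (g ∘ σ) := Tuple.monotone_sort g
  have hanti : Antitone θs := by
    intro i j hij
    have h := hσmono hij
    simp only [hg, Function.comp_apply, neg_le_neg_iff] at h
    exact h
  set ε : Fin I → ℝ := fun i => if θ₀ (σ i) < 0 then -1 else 1 with hε
  have hmem : θs ∈ Θ := by
    have h := hSPI σ ε
      (fun i => by by_cases h : θ₀ (σ i) < 0 <;> simp [hε, h]) θ₀ hθ₀Θ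
    have heq : (fun i => ε i * θ₀ (σ i)) = θs := by
      funext i
      by_cases h : θ₀ (σ i) < 0
      · simp [hε, hθs, h, abs_of_neg h]
      · simp [hε, hθs, h, abs_of_nonneg (not_lt.mp h)]
    rwa [heq] at h
  refine ⟨θs, hmem, fun i => abs_nonneg _, hanti, ?_⟩
  intro θ hθ
  rw [l1dist_eq θ zp hnn, l1dist_eq θs zp hnn]
  have hstep1 : ∑ i, max (|θ i| - zp i) 0 ≤ ∑ i, max (|θ₀ i| - zp i) 0 := hmax hθ
  have hstep2 : ∑ i, max (|θ₀ i| - zp i) 0 ≤ ∑ i, max (θs i - zp i) 0 := by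
    have h := rearrange θs zp hanti hmono σ⁻¹
    have heq : ∀ i, θs (σ⁻¹ i) = |θ₀ i| := by
      intro i; simp [hθs]
    calc ∑ i, max (|θ₀ i| - zp i) 0 = ∑ i, max (θs (σ⁻¹ i) - zp i) 0 := by
          exact Finset.sum_congr rfl (fun i _ => by rw [heq i])
      _ ≤ ∑ i, max (θs i - zp i) 0 := h
  have hstep3 : ∑ i, max (θs i - zp i) 0 = ∑ i, max (|θs i| - zp i) 0 :=
    Finset.sum_congr rfl (fun i _ => by rw [abs_of_nonneg (abs_nonneg _)])
  linarith
end
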